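/- Let S be the Cox ring of P^{n_1} × ... × P^{n_s} and let I ⊆ S be a strongly multistable ideal. Then I^{multilex} := ⊕_{(a_1,...,a_s) ∈ ℕ^s} (I_{(a_1,...,a_s)})^{multilex} is an ideal of S. -/

import Mathlib

open MvPolynomial

namespace Gotzmann

/-- Variable index set for the Cox ring of `P^{n 0} × ... × P^{n (s-1)}`:
the variable `x_{i,j}` is `⟨i, j⟩`. -/
abbrev PPVar (s : ℕ) (n : Fin s → ℕ) : Type := Σ i : Fin s, Fin (n i + 1)

/-- The multidegree of the variable `x_{i,j}` is the standard basis vector `e_i ∈ ℤ^s` (here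
realised in `ℕ^s`). -/
def ppw (s : ℕ) (n : Fin s → ℕ) : PPVar s n → (Fin s → ℕ) :=
  fun v => Pi.single v.1 1

/-- Weighted degree of an exponent vector. -/
def wdeg {σ M : Type*} [AddCommMonoid M] (w : σ → M) (u : σ →₀ ℕ) : M :=
  u.sum fun v e => e • w v

/-- Multigraded Hilbert function of `S/I` in degree `b`: the dimension of the image of the
degree-`b` part of `S` in `S/I`. -/
noncomputable def hilb (k : Type*) [Field k] {σ M : Type*} [AddCommMonoid M]
    (w : σ → M) (I : Ideal (MvPolynomial σ k)) (b : M) : ℕ :=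
  Module.finrank k ((weightedHomogeneousSubmodule k w b).map
    (Ideal.Quotient.mkₐ k I).toLinearMap)

/-- An ideal homogeneous with respect to the grading by `w`. -/
def IsHomog {k : Type*} [Field k] {σ M : Type*} [AddCommMonoid M]
    (w : σ → M) (I : Ideal (MvPolynomial σ k)) : Prop :=
  ∃ G : Set (MvPolynomial σ k),
    (∀ f ∈ G, ∃ d : M, f.IsWeightedHomogeneous w d) ∧ I = Ideal.span G

/-- A monomial ideal. -/
def IsMonomialIdeal {k : Type*} [Field k] {σ : Type*} (I : Ideal (MvPolynomial σ k)) : Prop :=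
  ∃ A : Set (σ →₀ ℕ), I = Ideal.span ((fun u => (monomial u (1 : k))) '' A)

/-- Generated in degrees componentwise at most `a`. -/
def GenInDegLE {k : Type*} [Field k] {σ : Type*} {s : ℕ}
    (w : σ → (Fin s → ℕ)) (I : Ideal (MvPolynomial σ k)) (a : Fin s → ℕ) : Prop :=
  ∃ G : Set (MvPolynomial σ k), I = Ideal.span G ∧
    ∀ f ∈ G, ∃ d : Fin s → ℕ, f.IsWeightedHomogeneous w d ∧ ∀ i, d i ≤ a i

/-- Generated in degrees at most `a` for the standard grading. -/
def GenInDegLE1 {k : Type*} [Field k] {σ : Type*}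
    (I : Ideal (MvPolynomial σ k)) (a : ℕ) : Prop :=
  ∃ G : Set (MvPolynomial σ k), I = Ideal.span G ∧
    ∀ f ∈ G, ∃ d : ℕ, f.IsWeightedHomogeneous (fun _ : σ => (1 : ℕ)) d ∧ d ≤ a

/-- `P` is the (multigraded) Hilbert polynomial of `I`: it agrees with the Hilbert function
for all multidegrees sufficiently deep in `ℕ^s`. -/
def IsHilbPoly (k : Type*) [Field k] {σ : Type*} {s : ℕ}
    (w : σ → (Fin s → ℕ)) (I : Ideal (MvPolynomial σ k))
    (P : MvPolynomial (Fin s) ℚ) : Prop :=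
  ∃ N : ℕ, ∀ b : Fin s → ℕ, (∀ i, N ≤ b i) →
    eval (fun i => (b i : ℚ)) P = (hilb k w I b : ℚ)

/-- `P` is the Hilbert polynomial of the standard-graded ideal `I`. -/
def IsHilbPoly1 (k : Type*) [Field k] {σ : Type*}
    (I : Ideal (MvPolynomial σ k)) (P : Polynomial ℚ) : Prop :=
  ∃ N : ℕ, ∀ b : ℕ, N ≤ b →
    P.eval (b : ℚ) = (hilb k (fun _ : σ => (1 : ℕ)) I b : ℚ)

/-- Hilbert polynomial for a `ℤ^s`-graded ring, agreement deep in `ℕ^s ⊆ ℤ^s`. -/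
def IsHilbPolyZ (k : Type*) [Field k] {σ : Type*} {s : ℕ}
    (w : σ → (Fin s → ℤ)) (I : Ideal (MvPolynomial σ k))
    (P : MvPolynomial (Fin s) ℚ) : Prop :=
  ∃ N : ℕ, ∀ b : Fin s → ℕ, (∀ i, N ≤ b i) →
    eval (fun i => (b i : ℚ)) P = (hilb k w I (fun i => (b i : ℤ)) : ℚ)

/-- A strongly multistable (monomial) ideal. -/
def StronglyMultistable {k : Type*} [Field k] {s : ℕ} {n : Fin s → ℕ}
    (I : Ideal (MvPolynomial (PPVar s n) k)) : Prop :=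
  IsMonomialIdeal I ∧
    ∀ u : PPVar s n →₀ ℕ, (monomial u (1 : k)) ∈ I →
      ∀ (i : Fin s) (j j' : Fin (n i + 1)), j' < j → u ⟨i, j⟩ ≠ 0 →
        (monomial (u - Finsupp.single ⟨i, j⟩ 1 + Finsupp.single ⟨i, j'⟩ 1) (1 : k)) ∈ I

/-- A strongly multistable set of exponent vectors. -/
def StronglyMultistableSet {s : ℕ} {n : Fin s → ℕ} (M : Set (PPVar s n →₀ ℕ)) : Prop :=
  ∀ u ∈ M, ∀ (i : Fin s) (j j' : Fin (n i + 1)), j' < j → u ⟨i, j⟩ ≠ 0 →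
    u - Finsupp.single ⟨i, j⟩ 1 + Finsupp.single ⟨i, j'⟩ 1 ∈ M

/-- The part of an exponent vector supported on block `i`. -/
noncomputable def blockPart {s : ℕ} {n : Fin s → ℕ} (i : Fin s) (u : PPVar s n →₀ ℕ) :
    PPVar s n →₀ ℕ := u.filter fun v => v.1 = i

/-- The part of an exponent vector supported off block `i`. -/
noncomputable def offBlock {s : ℕ} {n : Fin s → ℕ} (i : Fin s) (u : PPVar s n →₀ ℕ) :
    PPVar s n →₀ ℕ := u.filter fun v => v.1 ≠ i

/-- Exponent vectors supported on block `i` of total degree `d`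
(monomials of degree `d·e_i`). -/
def blockMon {s : ℕ} {n : Fin s → ℕ} (i : Fin s) (d : ℕ) : Set (PPVar s n →₀ ℕ) :=
  {p | (∀ v ∈ p.support, v.1 = i) ∧ p.sum (fun _ e => e) = d}

/-- `blockLt i u v` : the block-`i` monomial of `v` is strictly larger than that of `u` in the
lexicographic order with `x_{i,0} ≻ x_{i,1} ≻ ⋯`. -/
def blockLt {s : ℕ} {n : Fin s → ℕ} (i : Fin s) (u v : PPVar s n →₀ ℕ) : Prop :=
  Pi.Lex (· < ·) (fun {_} => (· < ·)) (fun j => u ⟨i, j⟩) (fun j => v ⟨i, j⟩)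

/-- `M` is an `x_i`-lex set: replacing the block-`i` part of a member by any lexicographically
larger monomial of the same degree stays in `M`. -/
def IsXiLex {s : ℕ} {n : Fin s → ℕ} (i : Fin s) (M : Set (PPVar s n →₀ ℕ)) : Prop :=
  ∀ u ∈ M, ∀ p' : PPVar s n →₀ ℕ,
    (∀ v ∈ p'.support, v.1 = i) →
    p'.sum (fun _ e => e) = (blockPart i u).sum (fun _ e => e) →
    blockLt i (blockPart i u) p' →
    offBlock i u + p' ∈ M

/-- The initial lexsegment of size `c` among block-`i` monomials of degree `d`. -/
noncomputable def lexSeg {s : ℕ} {n : Fin s → ℕ} (i : Fin s) (d c : ℕ) :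
    Set (PPVar s n →₀ ℕ) :=
  {p ∈ blockMon i d | (blockMon (n := n) i d ∩ {p' | blockLt i p p'}).ncard < c}

/-- The operation `M ↦ M^{x_i lex}`: in each fibre over a fixed off-block-`i` part, replace the
set of block-`i` parts by the initial lexsegment of the same cardinality. -/
noncomputable def xiLexify {s : ℕ} {n : Fin s → ℕ} (i : Fin s)
    (M : Set (PPVar s n →₀ ℕ)) : Set (PPVar s n →₀ ℕ) :=
  {w | ∃ u ∈ M, offBlock i w = offBlock i u ∧
        blockPart i w ∈ lexSeg i ((blockPart i u).sum fun _ e => e)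
          ({p | p ∈ blockMon i ((blockPart i u).sum fun _ e => e) ∧
              offBlock i u + p ∈ M}).ncard}

/-- Successively apply `M ↦ M^{x_i lex}` for the first `t` blocks. -/
noncomputable def lexifyUpTo {s : ℕ} {n : Fin s → ℕ} (M : Set (PPVar s n →₀ ℕ)) :
    ℕ → Set (PPVar s n →₀ ℕ)
  | 0 => M
  | t + 1 => if h : t < s then xiLexify ⟨t, h⟩ (lexifyUpTo M t) else lexifyUpTo M t

/-- `M^{multilex} = M^{x_1 lex ⋯ x_s lex}`. -/
noncomputable def multilexify {s : ℕ} {n : Fin s → ℕ} (M : Set (PPVar s n →₀ ℕ)) :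
    Set (PPVar s n →₀ ℕ) := lexifyUpTo M s

/-- The exponent vectors of the monomials of `I` of multidegree `a`. -/
def monomialsOf {k : Type*} [Field k] {s : ℕ} {n : Fin s → ℕ}
    (I : Ideal (MvPolynomial (PPVar s n) k)) (a : Fin s → ℕ) : Set (PPVar s n →₀ ℕ) :=
  {u | wdeg (ppw s n) u = a ∧ (monomial u (1 : k)) ∈ I}

/-- A multilex (monomial) ideal. -/
def IsMultilexIdeal {k : Type*} [Field k] {s : ℕ} {n : Fin s → ℕ}
    (I : Ideal (MvPolynomial (PPVar s n) k)) : Prop :=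
  IsMonomialIdeal I ∧ ∀ (a : Fin s → ℕ) (i : Fin s), IsXiLex i (monomialsOf I a)

/-- `κ` encodes the `d`-th Macaulay representation of `α`:
`α = C(κ(d),d) + ⋯ + C(κ(1),1)` with `κ(d) > ⋯ > κ(1) ≥ 0`; here `κ j` is the paper's
`κ(j+1)`. -/
def IsMacaulayRep (d α : ℕ) (κ : Fin d → ℕ) : Prop :=
  StrictMono κ ∧ α = ∑ j : Fin d, Nat.choose (κ j) ((j : ℕ) + 1)

/-- The Macaulay bound `α^{⟨d⟩}`. -/
noncomputable def macaulayBound (d α : ℕ) : ℕ :=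
  letI := Classical.propDecidable (∃ κ : Fin d → ℕ, IsMacaulayRep d α κ)
  if h : ∃ κ : Fin d → ℕ, IsMacaulayRep d α κ
  then ∑ j : Fin d, Nat.choose (h.choose j + 1) ((j : ℕ) + 2)
  else 0

/-- Maximal growth of a Hilbert function in one direction: with
`H u = C(nv+u, nv)·q(u) + r(u)` the Euclidean division, `H (u+1) = C(nv+u+1,nv)·q(u) + r(u)^⟨u⟩`. -/
def growthStep (nv : ℕ) (H : ℕ → ℕ) (u : ℕ) : Prop :=
  H (u + 1) =
    (nv + u + 1).choose nv * (H u / (nv + u).choose nv)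
      + macaulayBound u (H u % (nv + u).choose nv)

/-- Hilbert polynomial for a `ℤ^s`-graded Cox ring, with agreement sufficiently far into the nef
cone, parameterised by nef classes `c i`. -/
def IsHilbPolyNef (k : Type*) [Field k] {σ : Type*} {s : ℕ}
    (w : σ → (Fin s → ℤ)) (c : Fin s → (Fin s → ℤ))
    (I : Ideal (MvPolynomial σ k)) (P : MvPolynomial (Fin s) ℚ) : Prop :=
  ∃ N : ℕ, ∀ b : Fin s → ℕ, (∀ i, N ≤ b i) →
    eval (fun j => ((∑ i, (b i : ℤ) * c i j : ℤ) : ℚ)) P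
      = (hilb k w I (fun j => ∑ i, (b i : ℤ) * c i j) : ℚ)

/-- The `ℤ²`-grading of the Cox ring of Kleinschmidt's Picard-rank-2 toric variety `X_d(a)`:
`deg z_i = (-a_i, 1)` for `1 ≤ i ≤ s`, `deg z_{s+1} = (0,1)`, `deg z_i = (1,0)` otherwise
(indices here are `0`-based). -/
def kw (d s : ℕ) (a : Fin s → ℕ) : Fin (d + 2) → (Fin 2 → ℤ) :=
  fun i => if h : (i : ℕ) < s then ![-(a ⟨i, h⟩ : ℤ), 1]
    else if (i : ℕ) = s then ![0, 1] else ![1, 0]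


/-! ### Basic lemmas on degrees, block parts -/

section Basics

variable {s : ℕ} {n : Fin s → ℕ}

/-- Total degree of an exponent vector. -/
def tdeg (u : PPVar s n →₀ ℕ) : ℕ := u.sum fun _ e => e

/-- The basis exponent vector for variable `⟨i,j⟩`. -/
noncomputable def eV (i : Fin s) (j : Fin (n i + 1)) : PPVar s n →₀ ℕ := Finsupp.single ⟨i, j⟩ 1

theorem tdeg_add (u v : PPVar s n →₀ ℕ) : tdeg (u + v) = tdeg u + tdeg v := by
  classical
  simpa [tdeg] using Finsupp.sum_add_index' (h := fun (_ : PPVar s n) (e : ℕ) => e)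
    (fun _ => rfl) (fun _ _ _ => rfl)

theorem tdeg_single (v : PPVar s n) (c : ℕ) : tdeg (Finsupp.single v c) = c := by
  classical
  simp [tdeg, Finsupp.sum_single_index]

theorem wdeg_add (w : PPVar s n → Fin s → ℕ) (u v : PPVar s n →₀ ℕ) :
    wdeg w (u + v) = wdeg w u + wdeg w v := by
  classical
  simpa [wdeg] using Finsupp.sum_add_index' (h := fun (x : PPVar s n) (e : ℕ) => e • w x)
    (fun _ => by simp) (fun x e e' => by simp [add_smul])

theorem wdeg_single (w : PPVar s n → Fin s → ℕ) (v : PPVar s n) (c : ℕ) :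
    wdeg w (Finsupp.single v c) = c • w v := by
  classical
  unfold wdeg
  rw [Finsupp.sum_single_index (by simp)]

theorem le_tdeg (u : PPVar s n →₀ ℕ) (v : PPVar s n) : u v ≤ tdeg u := by
  classical
  by_cases h : v ∈ u.support
  · exact Finset.single_le_sum (f := fun a => u a) (fun _ _ => Nat.zero_le _) h
  · simp [Finsupp.notMem_support_iff.mp h]

theorem off_add_block (i : Fin s) (u : PPVar s n →₀ ℕ) :
    offBlock i u + blockPart i u = u := by
  classical
  have := Finsupp.filter_pos_add_filter_neg (p := fun v : PPVar s n => v.1 = i) u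
  rw [add_comm]
  simpa [blockPart, offBlock] using this

theorem blockPart_apply (i : Fin s) (u : PPVar s n →₀ ℕ) (j : Fin (n i + 1)) :
    blockPart i u ⟨i, j⟩ = u ⟨i, j⟩ := by
  classical
  simp [blockPart, Finsupp.filter_apply]

theorem offBlock_apply_ne (i : Fin s) (u : PPVar s n →₀ ℕ) (v : PPVar s n) (h : v.1 ≠ i) :
    offBlock i u v = u v := by
  classical
  simp [offBlock, Finsupp.filter_apply, h]

theorem blockPart_support (i : Fin s) (u : PPVar s n →₀ ℕ) :
    ∀ v ∈ (blockPart i u).support, v.1 = i := by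
  classical
  intro v hv
  have := Finsupp.mem_support_iff.mp hv
  by_contra h
  exact this (by simp [blockPart, Finsupp.filter_apply, h])

theorem blockPart_add (i : Fin s) (u v : PPVar s n →₀ ℕ) :
    blockPart i (u + v) = blockPart i u + blockPart i v := by
  classical
  simp [blockPart, Finsupp.filter_add]

theorem offBlock_add (i : Fin s) (u v : PPVar s n →₀ ℕ) :
    offBlock i (u + v) = offBlock i u + offBlock i v := by
  classical
  simp [offBlock, Finsupp.filter_add]

theorem blockPart_sub (i : Fin s) (u v : PPVar s n →₀ ℕ) :
    blockPart i (u - v) = blockPart i u - blockPart i v := by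
  classical
  ext w
  simp only [blockPart, Finsupp.filter_apply, Finsupp.tsub_apply]
  split <;> simp

theorem offBlock_sub (i : Fin s) (u v : PPVar s n →₀ ℕ) :
    offBlock i (u - v) = offBlock i u - offBlock i v := by
  classical
  ext w
  simp only [offBlock, Finsupp.filter_apply, Finsupp.tsub_apply]
  split <;> simp

theorem blockPart_eV (i : Fin s) (j : Fin (n i + 1)) :
    blockPart i (eV i j) = eV i j := by
  classical
  simp [blockPart, eV, Finsupp.filter_single_of_pos]

theorem offBlock_eV (i : Fin s) (j : Fin (n i + 1)) :
    offBlock i (eV i j) = 0 := by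
  classical
  simp [offBlock, eV, Finsupp.filter_single_of_neg]

theorem blockPart_single_ne (i : Fin s) (v : PPVar s n) (h : v.1 ≠ i) (c : ℕ) :
    blockPart i (Finsupp.single v c) = 0 := by
  classical
  simp [blockPart, Finsupp.filter_single_of_neg, h]

theorem offBlock_single_ne (i : Fin s) (v : PPVar s n) (h : v.1 ≠ i) (c : ℕ) :
    offBlock i (Finsupp.single v c) = Finsupp.single v c := by
  classical
  simp [offBlock, Finsupp.filter_single_of_pos, h]

/-- If `u` is supported on block `i` then `blockPart i u = u`. -/
theorem blockPart_eq_self (i : Fin s) (u : PPVar s n →₀ ℕ)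
    (h : ∀ v ∈ u.support, v.1 = i) : blockPart i u = u := by
  classical
  ext v
  by_cases hv : v.1 = i
  · simp [blockPart, Finsupp.filter_apply, hv]
  · have : u v = 0 := by
      by_contra h0
      exact hv (h v (Finsupp.mem_support_iff.mpr h0))
    simp [blockPart, Finsupp.filter_apply, hv, this]

theorem offBlock_eq_zero (i : Fin s) (u : PPVar s n →₀ ℕ)
    (h : ∀ v ∈ u.support, v.1 = i) : offBlock i u = 0 := by
  classical
  ext v
  by_cases hv : v.1 = i
  · simp [offBlock, Finsupp.filter_apply, hv]
  · have : u v = 0 := by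
      by_contra h0
      exact hv (h v (Finsupp.mem_support_iff.mpr h0))
    simp [offBlock, Finsupp.filter_apply, hv, this]

/-- wdeg of a block-supported vector. -/
theorem wdeg_of_block (i : Fin s) (u : PPVar s n →₀ ℕ)
    (h : ∀ v ∈ u.support, v.1 = i) : wdeg (ppw s n) u = (tdeg u) • Pi.single i 1 := by
  classical
  unfold wdeg tdeg
  rw [Finsupp.sum, Finsupp.sum]
  rw [Finset.sum_smul]
  refine Finset.sum_congr rfl ?_
  intro v hv
  rw [ppw, h v hv]

/-- The block degree of `u` is the `i`-th component of its weighted degree. -/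
theorem tdeg_blockPart (i : Fin s) (u : PPVar s n →₀ ℕ) :
    tdeg (blockPart i u) = wdeg (ppw s n) u i := by
  classical
  have h1 : wdeg (ppw s n) u i = u.sum fun v e => if v.1 = i then e else 0 := by
    unfold wdeg
    rw [Finsupp.sum, Finset.sum_apply, Finsupp.sum]
    refine Finset.sum_congr rfl ?_
    intro v _
    rw [ppw, Pi.smul_apply, Pi.single_apply]
    by_cases hvi : v.1 = i
    · simp [hvi]
    · have hvi' : i ≠ v.1 := fun h => hvi h.symm
      simp [hvi, hvi']
  rw [h1]
  unfold tdeg blockPart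
  rw [Finsupp.sum, Finsupp.sum]
  have hsub : (u.filter fun v : PPVar s n => v.1 = i).support ⊆ u.support := by
    rw [Finsupp.support_filter]
    exact Finset.filter_subset _ _
  rw [Finset.sum_subset hsub]
  · refine Finset.sum_congr rfl ?_
    intro v hv
    rw [Finsupp.filter_apply]
  · intro v hv hv2
    have h0 : (u.filter fun v : PPVar s n => v.1 = i) v = 0 := Finsupp.notMem_support_iff.mp hv2
    rw [Finsupp.filter_apply] at h0
    by_cases hvi : v.1 = i
    · simp [hvi] at h0 ⊢
      exact h0
    · simp [hvi]

end Basics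

/-! ### The block order, restricted monomial sets, ranks and segments -/

section BlockOrder

variable {s : ℕ} {n : Fin s → ℕ}

/-- Monomials of degree `d` on block `i`, with support within `T`. -/
def MonT (i : Fin s) (T : Finset (Fin (n i + 1))) (d : ℕ) : Set (PPVar s n →₀ ℕ) :=
  {u | u ∈ blockMon i d ∧ ∀ j, u ⟨i, j⟩ ≠ 0 → j ∈ T}

/-- Monomials whose block-`i` support lies weakly below `j`. -/
def KT (i : Fin s) (j : Fin (n i + 1)) : Set (PPVar s n →₀ ℕ) :=
  {u | ∀ t, u ⟨i, t⟩ ≠ 0 → t ≤ j}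

theorem MonT_univ (i : Fin s) (d : ℕ) :
    MonT (n := n) i Finset.univ d = blockMon i d := by
  ext u; simp [MonT]

theorem MonT_mono_T {i : Fin s} {T T' : Finset (Fin (n i + 1))} (h : T ⊆ T') (d : ℕ) :
    MonT (n := n) i T d ⊆ MonT i T' d := fun u hu => ⟨hu.1, fun j hj => h (hu.2 j hj)⟩

theorem mem_blockMon_iff {i : Fin s} {d : ℕ} {u : PPVar s n →₀ ℕ} :
    u ∈ blockMon i d ↔ (∀ v ∈ u.support, v.1 = i) ∧ tdeg u = d := Iff.rfl

/-- Two block-`i`-supported vectors with equal block coordinates are equal. -/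
theorem ext_block {i : Fin s} {u v : PPVar s n →₀ ℕ}
    (hu : ∀ w ∈ u.support, w.1 = i) (hv : ∀ w ∈ v.support, w.1 = i)
    (h : ∀ j, u ⟨i, j⟩ = v ⟨i, j⟩) : u = v := by
  ext w
  rcases w with ⟨i', j'⟩
  by_cases hi : i' = i
  · subst hi; exact h j'
  · have h1 : u ⟨i', j'⟩ = 0 := by
      by_contra h0
      exact hi (hu _ (Finsupp.mem_support_iff.mpr h0))
    have h2 : v ⟨i', j'⟩ = 0 := by
      by_contra h0
      exact hi (hv _ (Finsupp.mem_support_iff.mpr h0))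
    rw [h1, h2]

theorem blockLt_def {i : Fin s} {u v : PPVar s n →₀ ℕ} :
    blockLt i u v ↔ ∃ j0, (∀ k, k < j0 → u ⟨i, k⟩ = v ⟨i, k⟩) ∧ u ⟨i, j0⟩ < v ⟨i, j0⟩ :=
  Iff.rfl

theorem blockLt_irrefl {i : Fin s} {u : PPVar s n →₀ ℕ} : ¬ blockLt i u u := by
  rintro ⟨j, _, hj⟩
  exact lt_irrefl _ hj

theorem blockLt_trans {i : Fin s} {u v w : PPVar s n →₀ ℕ}
    (h1 : blockLt i u v) (h2 : blockLt i v w) : blockLt i u w := by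
  obtain ⟨j1, he1, hl1⟩ := h1
  obtain ⟨j2, he2, hl2⟩ := h2
  rcases lt_trichotomy j1 j2 with h | h | h
  · exact ⟨j1, fun k hk => (he1 k hk).trans (he2 k (hk.trans h)), by
      rw [← he2 j1 h]; exact hl1⟩
  · subst h
    exact ⟨j1, fun k hk => (he1 k hk).trans (he2 k hk), hl1.trans hl2⟩
  · exact ⟨j2, fun k hk => (he1 k (hk.trans h)).trans (he2 k hk), by
      rw [he1 j2 h]; exact hl2⟩

theorem blockLt_trichotomy {i : Fin s} {u v : PPVar s n →₀ ℕ}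
    (hu : ∀ w ∈ u.support, w.1 = i) (hv : ∀ w ∈ v.support, w.1 = i) (hne : u ≠ v) :
    blockLt i u v ∨ blockLt i v u := by
  classical
  set D : Finset (Fin (n i + 1)) := Finset.univ.filter (fun j => u ⟨i, j⟩ ≠ v ⟨i, j⟩) with hD
  have hDne : D.Nonempty := by
    by_contra h
    rw [Finset.not_nonempty_iff_eq_empty] at h
    refine hne (ext_block hu hv fun j => ?_)
    by_contra h0
    have : j ∈ D := by simp [hD, h0]
    simp [h] at this
  set j0 := D.min' hDne with hj0
  have hj0D : j0 ∈ D := D.min'_mem hDne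
  have heq : ∀ k, k < j0 → u ⟨i, k⟩ = v ⟨i, k⟩ := by
    intro k hk
    by_contra h0
    have : k ∈ D := by simp [hD, h0]
    exact absurd (D.min'_le k this) (not_le.mpr hk)
  have hne0 : u ⟨i, j0⟩ ≠ v ⟨i, j0⟩ := by
    have := hj0D
    simp [hD] at this
    exact this
  rcases lt_or_gt_of_ne hne0 with h | h
  · exact Or.inl ⟨j0, heq, h⟩
  · exact Or.inr ⟨j0, fun k hk => (heq k hk).symm, h⟩

theorem MonT_finite (i : Fin s) (T : Finset (Fin (n i + 1))) (d : ℕ) :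
    (MonT (n := n) i T d).Finite := by
  classical
  have hsub : MonT (n := n) i T d ⊆ Set.Iic (Finsupp.equivFunOnFinite.symm fun _ => d) := by
    intro u hu
    intro v
    have hd : tdeg u = d := hu.1.2
    have : u v ≤ d := hd ▸ le_tdeg u v
    simpa using this
  exact (Set.finite_Iic _).subset hsub

/-- The set of monomials strictly above `u` in the block order. -/
def aboveS (i : Fin s) (T : Finset (Fin (n i + 1))) (d : ℕ) (u : PPVar s n →₀ ℕ) :
    Set (PPVar s n →₀ ℕ) := MonT i T d ∩ {q | blockLt i u q}

/-- The rank of `u`: the number of monomials above it. -/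
noncomputable def rnk (i : Fin s) (T : Finset (Fin (n i + 1))) (d : ℕ)
    (u : PPVar s n →₀ ℕ) : ℕ := (aboveS i T d u).ncard

/-- The initial lex segment of size `c` in `MonT i T d`. -/
def segT (i : Fin s) (T : Finset (Fin (n i + 1))) (d c : ℕ) : Set (PPVar s n →₀ ℕ) :=
  {u | u ∈ MonT i T d ∧ rnk i T d u < c}

theorem lexSeg_eq_segT (i : Fin s) (d c : ℕ) :
    lexSeg (n := n) i d c = segT i Finset.univ d c := by
  ext u
  simp [lexSeg, segT, rnk, aboveS, MonT_univ]

theorem segT_subset (i : Fin s) (T : Finset (Fin (n i + 1))) (d c : ℕ) :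
    segT (n := n) i T d c ⊆ MonT i T d := fun _ h => h.1

theorem segT_mono (i : Fin s) (T : Finset (Fin (n i + 1))) (d : ℕ) {c c' : ℕ} (h : c ≤ c') :
    segT (n := n) i T d c ⊆ segT i T d c' := fun u hu => ⟨hu.1, lt_of_lt_of_le hu.2 h⟩

theorem aboveS_subset_of_lt {i : Fin s} {T : Finset (Fin (n i + 1))} {d : ℕ}
    {u v : PPVar s n →₀ ℕ} (h : blockLt i u v) :
    aboveS i T d v ⊆ aboveS i T d u :=
  fun q hq => ⟨hq.1, blockLt_trans h hq.2⟩

theorem rnk_le_of_lt {i : Fin s} {T : Finset (Fin (n i + 1))} {d : ℕ}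
    {u v : PPVar s n →₀ ℕ} (h : blockLt i u v) : rnk i T d v ≤ rnk i T d u :=
  Set.ncard_le_ncard (aboveS_subset_of_lt h) ((MonT_finite i T d).subset Set.inter_subset_left)

theorem rnk_lt_of_lt {i : Fin s} {T : Finset (Fin (n i + 1))} {d : ℕ}
    {u v : PPVar s n →₀ ℕ} (hv : v ∈ MonT i T d) (h : blockLt i u v) :
    rnk i T d v < rnk i T d u := by
  have h1 : insert v (aboveS i T d v) ⊆ aboveS i T d u := by
    intro q hq
    rcases Set.mem_insert_iff.mp hq with rfl | hq
    · exact ⟨hv, h⟩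
    · exact aboveS_subset_of_lt h hq
  have hfin : (aboveS i T d v).Finite := (MonT_finite i T d).subset Set.inter_subset_left
  have h2 : (insert v (aboveS i T d v)).ncard = rnk i T d v + 1 :=
    Set.ncard_insert_of_notMem (fun hq => blockLt_irrefl hq.2) hfin
  have h3 : (insert v (aboveS i T d v)).ncard ≤ rnk i T d u :=
    Set.ncard_le_ncard h1 ((MonT_finite i T d).subset Set.inter_subset_left)
  omega

theorem rnk_injOn (i : Fin s) (T : Finset (Fin (n i + 1))) (d : ℕ) :
    Set.InjOn (rnk i T d) (MonT i T d) := by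
  intro u hu v hv h
  by_contra hne
  rcases blockLt_trichotomy (fun w hw => (hu.1.1 w hw)) (fun w hw => (hv.1.1 w hw)) hne
    with hlt | hlt
  · exact absurd h (Nat.ne_of_gt (rnk_lt_of_lt hv hlt))
  · exact absurd h (Nat.ne_of_lt (rnk_lt_of_lt hu hlt))

theorem rnk_lt_ncard {i : Fin s} {T : Finset (Fin (n i + 1))} {d : ℕ}
    {u : PPVar s n →₀ ℕ} (hu : u ∈ MonT i T d) :
    rnk i T d u < (MonT (n := n) i T d).ncard := by
  have h1 : aboveS i T d u ⊆ MonT i T d \ {u} := by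
    intro q hq
    exact ⟨hq.1, fun hq0 => blockLt_irrefl (hq0 ▸ hq.2)⟩
  have h2 : rnk i T d u ≤ (MonT (n := n) i T d \ {u}).ncard :=
    Set.ncard_le_ncard h1 ((MonT_finite i T d).subset Set.diff_subset)
  have h3 : (MonT (n := n) i T d \ {u}).ncard + 1 = (MonT (n := n) i T d).ncard :=
    Set.ncard_diff_singleton_add_one hu (MonT_finite i T d)
  omega

theorem rnk_image (i : Fin s) (T : Finset (Fin (n i + 1))) (d : ℕ) :
    rnk i T d '' (MonT i T d) = Set.Iio ((MonT (n := n) i T d).ncard) := by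
  have h1 : rnk i T d '' (MonT i T d) ⊆ Set.Iio ((MonT (n := n) i T d).ncard) := by
    rintro c ⟨u, hu, rfl⟩
    exact rnk_lt_ncard hu
  refine Set.eq_of_subset_of_ncard_le h1 ?_ ?_
  · rw [Set.ncard_image_of_injOn (rnk_injOn i T d)]
    have : Set.Iio ((MonT (n := n) i T d).ncard) = ↑(Finset.Iio ((MonT (n := n) i T d).ncard)) := by
      simp
    rw [this, Set.ncard_coe_finset, Nat.card_Iio]
  · exact Set.finite_Iio _

theorem rnk_surj {i : Fin s} {T : Finset (Fin (n i + 1))} {d c : ℕ}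
    (h : c < (MonT (n := n) i T d).ncard) : ∃ u ∈ MonT (n := n) i T d, rnk i T d u = c := by
  have : c ∈ rnk i T d '' (MonT i T d) := by rw [rnk_image]; exact h
  obtain ⟨u, hu, h⟩ := this
  exact ⟨u, hu, h⟩

theorem ncard_segT (i : Fin s) (T : Finset (Fin (n i + 1))) (d c : ℕ) :
    (segT (n := n) i T d c).ncard = min c (MonT (n := n) i T d).ncard := by
  classical
  have himg : rnk i T d '' (segT i T d c) = Set.Iio (min c (MonT (n := n) i T d).ncard) := by
    ext m
    constructor
    · rintro ⟨u, hu, rfl⟩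
      exact Set.mem_Iio.mpr (lt_min hu.2 (rnk_lt_ncard hu.1))
    · intro hm
      rw [Set.mem_Iio, lt_min_iff] at hm
      obtain ⟨u, hu, rfl⟩ := rnk_surj hm.2
      exact ⟨u, ⟨hu, hm.1⟩, rfl⟩
  have hinj : Set.InjOn (rnk i T d) (segT i T d c) :=
    (rnk_injOn i T d).mono (segT_subset i T d c)
  rw [← Set.ncard_image_of_injOn hinj, himg]
  have : Set.Iio (min c (MonT (n := n) i T d).ncard)
      = ↑(Finset.Iio (min c (MonT (n := n) i T d).ncard)) := by simp
  rw [this, Set.ncard_coe_finset, Nat.card_Iio]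

theorem segT_upward {i : Fin s} {T : Finset (Fin (n i + 1))} {d c : ℕ}
    {u v : PPVar s n →₀ ℕ} (hu : u ∈ segT i T d c) (hv : v ∈ MonT i T d)
    (h : blockLt i u v) : v ∈ segT (n := n) i T d c :=
  ⟨hv, lt_of_le_of_lt (rnk_le_of_lt h) hu.2⟩

/-- An upward-closed subset of `MonT i T d` is the initial segment of its size. -/
theorem upward_eq_segT {i : Fin s} {T : Finset (Fin (n i + 1))} {d : ℕ}
    {X : Set (PPVar s n →₀ ℕ)} (hX : X ⊆ MonT i T d)
    (hup : ∀ u ∈ X, ∀ v ∈ MonT (n := n) i T d, blockLt i u v → v ∈ X) :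
    X = segT i T d X.ncard := by
  have hXfin : X.Finite := (MonT_finite i T d).subset hX
  have hsub : X ⊆ segT i T d X.ncard := by
    intro u hu
    refine ⟨hX hu, ?_⟩
    have h1 : aboveS i T d u ⊆ X \ {u} := by
      intro q hq
      exact ⟨hup u hu q hq.1 hq.2, fun h0 => blockLt_irrefl (h0 ▸ hq.2)⟩
    have h2 : rnk i T d u ≤ (X \ {u}).ncard :=
      Set.ncard_le_ncard h1 (hXfin.subset Set.diff_subset)
    have h3 : (X \ {u}).ncard + 1 = X.ncard := Set.ncard_diff_singleton_add_one hu hXfin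
    omega
  refine Set.eq_of_subset_of_ncard_le hsub ?_ ((MonT_finite i T d).subset
    (segT_subset i T d _))
  rw [ncard_segT]
  exact min_le_left _ _

end BlockOrder

/-! ### Moves, shadows, stability -/

section Moves

variable {s : ℕ} {n : Fin s → ℕ}

theorem eV_apply_blk (i : Fin s) (j k : Fin (n i + 1)) :
    eV (n := n) i j ⟨i, k⟩ = if j = k then 1 else 0 := by
  classical
  rw [eV, Finsupp.single_apply]
  by_cases h : j = k
  · simp [h]
  · have : (⟨i, j⟩ : PPVar s n) ≠ ⟨i, k⟩ := by
      intro hc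
      exact h (by
        have := Sigma.mk.inj_iff.mp hc
        exact eq_of_heq this.2)
    simp [this, h]

theorem eV_apply_ne (i : Fin s) (j : Fin (n i + 1)) (v : PPVar s n) (h : v.1 ≠ i) :
    eV (n := n) i j v = 0 := by
  classical
  rw [eV, Finsupp.single_apply]
  have : (⟨i, j⟩ : PPVar s n) ≠ v := fun hc => h (by rw [← hc])
  simp [this]

theorem tdeg_eV (i : Fin s) (j : Fin (n i + 1)) : tdeg (eV (n := n) i j) = 1 := by
  rw [eV, tdeg_single]

theorem blockLt_intro' {i : Fin s} {u v : PPVar s n →₀ ℕ} (j0 : Fin (n i + 1))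
    (h1 : ∀ k, k < j0 → u ⟨i, k⟩ = v ⟨i, k⟩) (h2 : u ⟨i, j0⟩ < v ⟨i, j0⟩) :
    blockLt i u v := ⟨j0, h1, h2⟩

theorem blockLt_elim' {i : Fin s} {u v : PPVar s n →₀ ℕ} (h : blockLt i u v) :
    ∃ j0 : Fin (n i + 1), (∀ k, k < j0 → u ⟨i, k⟩ = v ⟨i, k⟩) ∧ u ⟨i, j0⟩ < v ⟨i, j0⟩ := h

theorem eV_le_iff {i : Fin s} {j : Fin (n i + 1)} {u : PPVar s n →₀ ℕ} :
    eV i j ≤ u ↔ u ⟨i, j⟩ ≠ 0 := by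
  rw [eV, Finsupp.single_le_iff]
  omega

theorem tdeg_eq_zero_iff {u : PPVar s n →₀ ℕ} : tdeg u = 0 ↔ u = 0 := by
  classical
  constructor
  · intro h
    ext v
    have h1 : u v ≤ tdeg u := le_tdeg u v
    simp only [Finsupp.coe_zero, Pi.zero_apply]
    omega
  · rintro rfl
    simp [tdeg]

/-- sum of block coordinates computes the degree of a block-supported vector. -/
theorem tdeg_coords {i : Fin s} {u : PPVar s n →₀ ℕ} (h : ∀ v ∈ u.support, v.1 = i) :
    tdeg u = ∑ k : Fin (n i + 1), u ⟨i, k⟩ := by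
  classical
  have hmap : ∑ k : Fin (n i + 1), u ⟨i, k⟩
      = ∑ w ∈ Finset.univ.map ⟨fun k : Fin (n i + 1) => (⟨i, k⟩ : PPVar s n),
          fun a b hab => by
            have := Sigma.mk.inj_iff.mp hab
            exact eq_of_heq this.2⟩, u w := by
    rw [Finset.sum_map]
    rfl
  rw [hmap]
  rw [tdeg, Finsupp.sum]
  refine Finset.sum_subset ?_ ?_
  · intro w hw
    rcases w with ⟨i', j'⟩
    have : i' = i := h ⟨i', j'⟩ hw
    subst this
    simp
    exact ⟨j', rfl⟩
  · intro w _ hw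
    exact Finsupp.notMem_support_iff.mp hw

theorem sub_add_comm' (u v w : PPVar s n →₀ ℕ) (h : v ≤ u) :
    (u + w) - v = (u - v) + w := by
  classical
  ext a
  have := h a
  simp only [Finsupp.tsub_apply, Finsupp.add_apply]
  omega

theorem sub_eV_add_cancel {i : Fin s} {j : Fin (n i + 1)} {u : PPVar s n →₀ ℕ}
    (h : u ⟨i, j⟩ ≠ 0) : u - eV i j + eV i j = u := by
  classical
  rw [tsub_add_cancel_of_le (eV_le_iff.mpr h)]

theorem move_add_cancel {i : Fin s} {j j' : Fin (n i + 1)} {u : PPVar s n →₀ ℕ}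
    (h : u ⟨i, j⟩ ≠ 0) : (u - eV i j + eV i j') + eV i j = u + eV i j' := by
  classical
  rw [add_right_comm, sub_eV_add_cancel h]

/-- support of subtraction shrinks -/
theorem support_tsub_subset (u v : PPVar s n →₀ ℕ) :
    (u - v).support ⊆ u.support := by
  classical
  intro a ha
  rw [Finsupp.mem_support_iff] at ha ⊢
  rw [Finsupp.tsub_apply] at ha
  omega

theorem mem_MonT_move {i : Fin s} {T : Finset (Fin (n i + 1))} {d : ℕ}
    {u : PPVar s n →₀ ℕ} (hu : u ∈ MonT i T d) {j j' : Fin (n i + 1)}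
    (hj' : j' ∈ T) (hne : u ⟨i, j⟩ ≠ 0) :
    u - eV i j + eV i j' ∈ MonT (n := n) i T d := by
  classical
  have hblk : ∀ v ∈ (u - eV i j + eV i j').support, v.1 = i := by
    intro v hv
    have h1 := Finsupp.support_add hv
    rcases Finset.mem_union.mp h1 with h2 | h2
    · exact hu.1.1 v (support_tsub_subset _ _ h2)
    · have := Finsupp.support_single_subset h2
      rw [Finset.mem_singleton] at this
      rw [this]
  refine ⟨⟨hblk, ?_⟩, ?_⟩
  · -- degree
    have h1 := congrArg tdeg (move_add_cancel (j' := j') hne)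
    rw [tdeg_add (u - eV i j + eV i j') (eV i j), tdeg_add u (eV i j'), tdeg_eV,
      tdeg_eV] at h1
    have h2 : tdeg u = d := hu.1.2
    show tdeg (u - eV i j + eV i j') = d
    omega
  · -- support in T
    intro k hk
    have hco : (u - eV i j + eV i j') ⟨i, k⟩
        = u ⟨i, k⟩ - (if j = k then 1 else 0) + (if j' = k then 1 else 0) := by
      rw [Finsupp.add_apply, Finsupp.tsub_apply, eV_apply_blk, eV_apply_blk]
    by_cases hkj' : j' = k
    · rw [← hkj']; exact hj'
    · rw [hco] at hk
      simp only [hkj', if_false] at hk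
      have : u ⟨i, k⟩ ≠ 0 := by
        by_cases hkj : j = k <;> simp [hkj] at hk <;> omega
      exact hu.2 k this

/-- A strongly-stable move strictly increases the block order. -/
theorem move_blockLt {i : Fin s} {j j' : Fin (n i + 1)} {u : PPVar s n →₀ ℕ}
    (hjj : j' < j) (hne : u ⟨i, j⟩ ≠ 0) :
    blockLt i u (u - eV i j + eV i j') := by
  classical
  refine blockLt_intro' j' ?_ ?_
  · intro k hk
    have hkj : j ≠ k := fun h => absurd (h ▸ hk) (not_lt.mpr (le_of_lt hjj))
    have hkj' : j' ≠ k := fun h => absurd (h ▸ hk) (lt_irrefl _)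
    rw [Finsupp.add_apply, Finsupp.tsub_apply, eV_apply_blk, eV_apply_blk]
    simp [hkj, hkj']
  · have hjj' : j ≠ j' := Ne.symm (ne_of_lt hjj)
    rw [Finsupp.add_apply, Finsupp.tsub_apply, eV_apply_blk, eV_apply_blk]
    simp [hjj']

/-- The shadow of a set of block-`i` monomials, in direction of the variables in `T`. -/
def shT (i : Fin s) (T : Finset (Fin (n i + 1))) (A : Set (PPVar s n →₀ ℕ)) :
    Set (PPVar s n →₀ ℕ) := {w | ∃ u ∈ A, ∃ j ∈ T, w = u + eV i j}

/-- Strong stability relative to the variable set `T`. -/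
def StabT (i : Fin s) (T : Finset (Fin (n i + 1))) (A : Set (PPVar s n →₀ ℕ)) : Prop :=
  ∀ u ∈ A, ∀ j j' : Fin (n i + 1), j' < j → j' ∈ T → u ⟨i, j⟩ ≠ 0 →
    u - eV i j + eV i j' ∈ A

/-- Dividing by the variable `⟨i,t⟩`. -/
def DT (i : Fin s) (t : Fin (n i + 1)) (A : Set (PPVar s n →₀ ℕ)) :
    Set (PPVar s n →₀ ℕ) := {w | w + eV i t ∈ A}

theorem stab_segT (i : Fin s) (T : Finset (Fin (n i + 1))) (d c : ℕ) :
    StabT (n := n) i T (segT i T d c) := by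
  intro u hu j j' hjj hj' hne
  exact segT_upward hu (mem_MonT_move hu.1 hj' hne) (move_blockLt hjj hne)

theorem add_eV_mem {i : Fin s} {T : Finset (Fin (n i + 1))} {d : ℕ}
    {u : PPVar s n →₀ ℕ} (hu : u ∈ MonT i T d) {j : Fin (n i + 1)} (hj : j ∈ T) :
    u + eV i j ∈ MonT (n := n) i T (d + 1) := by
  classical
  refine ⟨⟨?_, ?_⟩, ?_⟩
  · intro v hv
    rcases Finset.mem_union.mp (Finsupp.support_add hv) with h2 | h2
    · exact hu.1.1 v h2
    · have := Finsupp.support_single_subset h2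
      rw [Finset.mem_singleton] at this
      rw [this]
  · have h1 : tdeg (u + eV i j) = tdeg u + 1 := by
      rw [tdeg_add, eV, tdeg_single]
    have h2 : tdeg u = d := hu.1.2
    show tdeg (u + eV i j) = d + 1
    rw [h1, h2]
  · intro k hk
    rw [Finsupp.add_apply, eV_apply_blk] at hk
    by_cases hkj : j = k
    · rw [← hkj]; exact hj
    · simp only [hkj, if_false, add_zero] at hk
      exact hu.2 k hk

theorem sub_eV_mem {i : Fin s} {T : Finset (Fin (n i + 1))} {d : ℕ}
    {q : PPVar s n →₀ ℕ} (hq : q ∈ MonT i T (d + 1)) {t : Fin (n i + 1)}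
    (ht : q ⟨i, t⟩ ≠ 0) : q - eV i t ∈ MonT (n := n) i T d := by
  classical
  refine ⟨⟨fun v hv => hq.1.1 v (support_tsub_subset _ _ hv), ?_⟩, ?_⟩
  · have h1 := congrArg tdeg (sub_eV_add_cancel ht)
    rw [tdeg_add (q - eV i t) (eV i t), tdeg_eV] at h1
    have h2 : tdeg q = d + 1 := hq.1.2
    show tdeg (q - eV i t) = d
    omega
  · intro k hk
    refine hq.2 k ?_
    rw [Finsupp.tsub_apply] at hk
    omega

theorem shT_subset_MonT {i : Fin s} {T : Finset (Fin (n i + 1))} {d : ℕ}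
    {A : Set (PPVar s n →₀ ℕ)} (hA : A ⊆ MonT i T d) :
    shT i T A ⊆ MonT (n := n) i T (d + 1) := by
  rintro w ⟨u, hu, j, hj, rfl⟩
  exact add_eV_mem (hA hu) hj

theorem stab_DT {i : Fin s} {T : Finset (Fin (n i + 1))} {t : Fin (n i + 1)}
    {A : Set (PPVar s n →₀ ℕ)} (hst : StabT i T A) : StabT (n := n) i T (DT i t A) := by
  classical
  intro w hw j j' hjj hj' hne
  have h1 : (w + eV i t) ⟨i, j⟩ ≠ 0 := by
    rw [Finsupp.add_apply]
    omega
  have h2 := hst (w + eV i t) hw j j' hjj hj' h1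
  have h3 : (w + eV i t) - eV i j + eV i j' = (w - eV i j + eV i j') + eV i t := by
    rw [sub_add_comm' _ _ _ (eV_le_iff.mpr hne), add_right_comm]
  rw [h3] at h2
  exact h2

theorem DT_subset_MonT {i : Fin s} {T : Finset (Fin (n i + 1))} {t : Fin (n i + 1)} {d : ℕ}
    {A : Set (PPVar s n →₀ ℕ)} (hA : A ⊆ MonT i T (d + 1)) :
    DT i t A ⊆ MonT (n := n) i T d := by
  intro w hw
  have h1 : (w + eV i t) - eV i t ∈ MonT (n := n) i T d := by
    refine sub_eV_mem (hA hw) ?_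
    rw [Finsupp.add_apply, eV_apply_blk]
    simp
  have h2 : (w + eV i t) - eV i t = w := by
    ext a
    simp only [Finsupp.tsub_apply, Finsupp.add_apply]
    omega
  rwa [h2] at h1

/-- Shadow of the `t`-divided set lies in the original set (for `t` the largest variable). -/
theorem shT_DT_subset {i : Fin s} {T : Finset (Fin (n i + 1))} {t : Fin (n i + 1)}
    {A : Set (PPVar s n →₀ ℕ)} (hst : StabT i T A) (htmax : ∀ j ∈ T, j ≤ t) :
    shT i T (DT i t A) ⊆ A := by
  classical
  rintro w ⟨u, hu, j, hj, rfl⟩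
  rcases eq_or_lt_of_le (htmax j hj) with heq | hlt
  · subst heq; exact hu
  · have h1 : (u + eV i t) ⟨i, t⟩ ≠ 0 := by
      rw [Finsupp.add_apply, eV_apply_blk]
      simp
    have h2 := hst (u + eV i t) hu t j hlt hj h1
    have h3 : (u + eV i t) - eV i t + eV i j = u + eV i j := by
      ext a
      simp only [Finsupp.add_apply, Finsupp.tsub_apply]
      omega
    rwa [h3] at h2

end Moves

/-! ### The shadow-segment lemma -/

section ShadowSeg

variable {s : ℕ} {n : Fin s → ℕ}

/-- The block support of `u`, as a finset of column indices. -/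
noncomputable def bsupp (i : Fin s) (u : PPVar s n →₀ ℕ) : Finset (Fin (n i + 1)) :=
  Finset.univ.filter (fun k => u ⟨i, k⟩ ≠ 0)

theorem mem_bsupp {i : Fin s} {u : PPVar s n →₀ ℕ} {k : Fin (n i + 1)} :
    k ∈ bsupp i u ↔ u ⟨i, k⟩ ≠ 0 := by
  simp [bsupp]

theorem bsupp_nonempty {i : Fin s} {u : PPVar s n →₀ ℕ}
    (hblk : ∀ v ∈ u.support, v.1 = i) (hne : tdeg u ≠ 0) : (bsupp i u).Nonempty := by
  classical
  rw [Finset.nonempty_iff_ne_empty]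
  intro h
  refine hne (tdeg_eq_zero_iff.mpr ?_)
  refine ext_block (i := i) hblk (by simp) fun j => ?_
  have : j ∉ bsupp i u := by rw [h]; exact Finset.notMem_empty j
  rw [mem_bsupp, not_not] at this
  simpa using this

theorem coord_add_eV {i : Fin s} (u : PPVar s n →₀ ℕ) (j k : Fin (n i + 1)) :
    (u + eV i j) ⟨i, k⟩ = u ⟨i, k⟩ + (if j = k then 1 else 0) := by
  rw [Finsupp.add_apply, eV_apply_blk]

theorem coord_sub_eV {i : Fin s} (u : PPVar s n →₀ ℕ) (j k : Fin (n i + 1)) :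
    (u - eV i j) ⟨i, k⟩ = u ⟨i, k⟩ - (if j = k then 1 else 0) := by
  rw [Finsupp.tsub_apply, eV_apply_blk]

/-- **Shadow-segment lemma**: if `q` is above `p·x_{i,v}` in the block order, then removing the
largest variable of `q` leaves a monomial which is `p` or above `p`. -/
theorem shadow_seg {i : Fin s} {T : Finset (Fin (n i + 1))} {d : ℕ}
    {p q : PPVar s n →₀ ℕ} (hp : p ∈ MonT i T d) (hq : q ∈ MonT i T (d + 1))
    (v : Fin (n i + 1)) (hlt : blockLt i (p + eV i v) q) :
    ∃ t', q ⟨i, t'⟩ ≠ 0 ∧ q - eV i t' ∈ MonT (n := n) i T d ∧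
      (q - eV i t' = p ∨ blockLt i p (q - eV i t')) := by
  classical
  have hqne : (bsupp i q).Nonempty := by
    refine bsupp_nonempty hq.1.1 ?_
    have : tdeg q = d + 1 := hq.1.2
    omega
  set t' := (bsupp i q).max' hqne with ht'def
  have ht'ne : q ⟨i, t'⟩ ≠ 0 := mem_bsupp.mp ((bsupp i q).max'_mem hqne)
  have ht'max : ∀ k, q ⟨i, k⟩ ≠ 0 → k ≤ t' := fun k hk =>
    Finset.le_max' _ k (mem_bsupp.mpr hk)
  have hmem : q - eV i t' ∈ MonT (n := n) i T d := sub_eV_mem hq ht'ne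
  refine ⟨t', ht'ne, hmem, ?_⟩
  obtain ⟨j0, hbelow, hat⟩ := blockLt_elim' hlt
  rw [coord_add_eV] at hat
  have hj0t' : j0 ≤ t' := ht'max j0 (by omega)
  by_cases hv : v < j0
  · -- case v < j0 : strict increase already at position v
    right
    refine blockLt_intro' v ?_ ?_
    · intro k hk
      have hkt' : t' ≠ k := by
        intro h; rw [← h] at hk; exact absurd (hk.trans hv) (not_lt.mpr hj0t')
      have hkv : v ≠ k := ne_of_gt hk
      have hbk := hbelow k (hk.trans hv)
      rw [coord_add_eV] at hbk
      rw [coord_sub_eV]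
      simp only [hkv, if_false, add_zero] at hbk
      simp [hkt', ← hbk]
    · have hbv := hbelow v hv
      rw [coord_add_eV] at hbv
      simp only [if_pos rfl] at hbv
      have hvt' : t' ≠ v := by
        intro h; rw [h] at hj0t'; exact absurd (lt_of_lt_of_le hv hj0t') (lt_irrefl v)
      rw [coord_sub_eV]
      simp [hvt', ← hbv]
  · -- case j0 ≤ v
    push_neg at hv
    have hbel' : ∀ k, k < j0 → p ⟨i, k⟩ = q ⟨i, k⟩ := by
      intro k hk
      have hbk := hbelow k hk
      rw [coord_add_eV] at hbk
      have : v ≠ k := by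
        intro h; rw [h] at hv; exact absurd (lt_of_le_of_lt hv hk) (lt_irrefl _)
      simpa [this] using hbk
    rcases lt_or_eq_of_le hj0t' with hj | hj
    · -- j0 < t' : strict at j0
      right
      refine blockLt_intro' j0 ?_ ?_
      · intro k hk
        have hkt' : t' ≠ k := by
          intro h; rw [← h] at hk; exact absurd (hk.trans hj) (lt_irrefl _)
        rw [coord_sub_eV]
        simp [hkt', hbel' k hk]
      · have hkt' : t' ≠ j0 := ne_of_gt hj
        rw [coord_sub_eV]
        simp only [hkt', if_false, Nat.sub_zero]
        omega
    · -- j0 = t'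
      by_cases hstrict : p ⟨i, j0⟩ + 1 < q ⟨i, j0⟩
      · right
        refine blockLt_intro' j0 ?_ ?_
        · intro k hk
          have hkt' : t' ≠ k := by
            intro h; rw [← h, ← hj] at hk; exact absurd hk (lt_irrefl _)
          rw [coord_sub_eV]
          simp [hkt', hbel' k hk]
        · rw [coord_sub_eV, ← hj]
          simp
          omega
      · -- equality case : q - eV i t' = p
        left
        have hq0 : p ⟨i, j0⟩ = q ⟨i, j0⟩ - 1 := by omega
        -- sums of coordinates
        have hpsum : ∑ k : Fin (n i + 1), p ⟨i, k⟩ = d := by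
          rw [← tdeg_coords hp.1.1]; exact hp.1.2
        have hqsum : ∑ k : Fin (n i + 1), (q - eV i t') ⟨i, k⟩ = d := by
          rw [← tdeg_coords hmem.1.1]; exact hmem.1.2
        have hagree : ∀ k, k ≤ j0 → (q - eV i t') ⟨i, k⟩ = p ⟨i, k⟩ := by
          intro k hk
          rcases lt_or_eq_of_le hk with hk | hk
          · have hkt' : t' ≠ k := by
              intro h; rw [← h, ← hj] at hk; exact absurd hk (lt_irrefl _)
            rw [coord_sub_eV]
            simp [hkt', hbel' k hk]
          · subst hk
            rw [coord_sub_eV, ← hj]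
            simp
            omega
        have hzero : ∀ k, j0 < k → (q - eV i t') ⟨i, k⟩ = 0 := by
          intro k hk
          have : q ⟨i, k⟩ = 0 := by
            by_contra h0
            exact absurd (hj ▸ ht'max k h0) (not_le.mpr hk)
          rw [coord_sub_eV, this]
          simp
        -- split the sums at j0
        have hsplit : ∀ f : Fin (n i + 1) → ℕ,
            ∑ k, f k = ∑ k ∈ Finset.univ.filter (· ≤ j0), f k
              + ∑ k ∈ Finset.univ.filter (fun k => ¬ k ≤ j0), f k := by
          intro f
          exact (Finset.sum_filter_add_sum_filter_not _ _ _).symm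
        have e1 : ∑ k ∈ Finset.univ.filter (· ≤ j0), (q - eV i t') ⟨i, k⟩
            = ∑ k ∈ Finset.univ.filter (· ≤ j0), p ⟨i, k⟩ := by
          refine Finset.sum_congr rfl fun k hk => ?_
          exact hagree k (by simpa using (Finset.mem_filter.mp hk).2)
        have e2 : ∑ k ∈ Finset.univ.filter (fun k => ¬ k ≤ j0), (q - eV i t') ⟨i, k⟩ = 0 := by
          refine Finset.sum_eq_zero fun k hk => ?_
          exact hzero k (by
            have := (Finset.mem_filter.mp hk).2
            omega)
        have e3 : ∑ k ∈ Finset.univ.filter (fun k => ¬ k ≤ j0), p ⟨i, k⟩ = 0 := by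
          have h1 := hsplit (fun k => p ⟨i, k⟩)
          have h2 := hsplit (fun k => (q - eV i t') ⟨i, k⟩)
          omega
        have hpzero : ∀ k, j0 < k → p ⟨i, k⟩ = 0 := by
          intro k hk
          have := Finset.sum_eq_zero_iff.mp e3 k (by
            simp only [Finset.mem_filter, Finset.mem_univ, true_and]
            omega)
          exact this
        refine ext_block hmem.1.1 hp.1.1 fun k => ?_
        rcases le_or_gt k j0 with hk | hk
        · exact hagree k hk
        · rw [hzero k hk, hpzero k hk]

end ShadowSeg

/-! ### The Eliahou–Kervaire counting formula for stable sets -/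

section EK

variable {s : ℕ} {n : Fin s → ℕ}

theorem ncard_shT {i : Fin s} {T : Finset (Fin (n i + 1))} {d : ℕ}
    {A : Set (PPVar s n →₀ ℕ)} (hA : A ⊆ MonT i T d) (hst : StabT i T A) :
    (shT i T A).ncard = ∑ j ∈ T, (A ∩ KT i j).ncard := by
  classical
  have hAfin : A.Finite := (MonT_finite i T d).subset hA
  set Af := hAfin.toFinset with hAf
  set img : Fin (n i + 1) → Finset (PPVar s n →₀ ℕ) :=
    fun j => (Af.filter (fun u => u ∈ KT i j)).image (· + eV i j) with himg
  -- coverage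
  have hcov : shT i T A = ↑(T.biUnion img) := by
    ext w
    constructor
    · rintro ⟨u, hu, j, hj, rfl⟩
      have hbne : (bsupp i (u + eV i j)).Nonempty := by
        refine ⟨j, mem_bsupp.mpr ?_⟩
        rw [coord_add_eV]
        simp
      set t0 := (bsupp i (u + eV i j)).max' hbne with ht0def
      have ht0ne : (u + eV i j) ⟨i, t0⟩ ≠ 0 := mem_bsupp.mp ((bsupp i _).max'_mem hbne)
      have hmax : ∀ k, (u + eV i j) ⟨i, k⟩ ≠ 0 → k ≤ t0 := fun k hk =>
        Finset.le_max' _ k (mem_bsupp.mpr hk)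
      have hjt0 : j ≤ t0 := by
        refine hmax j ?_
        rw [coord_add_eV]
        simp
      rcases eq_or_lt_of_le hjt0 with heq | hlt
      · -- t0 = j, u itself works
        refine Finset.mem_coe.mpr (Finset.mem_biUnion.mpr ⟨j, hj, ?_⟩)
        refine Finset.mem_image.mpr ⟨u, ?_, rfl⟩
        refine Finset.mem_filter.mpr ⟨hAfin.mem_toFinset.mpr hu, ?_⟩
        intro k hk
        rw [heq]
        refine hmax k ?_
        rw [coord_add_eV]
        omega
      · -- j < t0, use a move
        have hut0 : u ⟨i, t0⟩ ≠ 0 := by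
          have := ht0ne
          rw [coord_add_eV] at this
          have hne : j ≠ t0 := ne_of_lt hlt
          simpa [hne] using this
        have ht0T : t0 ∈ T := (hA hu).2 t0 hut0
        have hu' : u - eV i t0 + eV i j ∈ A := hst u hu t0 j hlt hj hut0
        refine Finset.mem_coe.mpr (Finset.mem_biUnion.mpr ⟨t0, ht0T, ?_⟩)
        refine Finset.mem_image.mpr ⟨u - eV i t0 + eV i j, ?_, move_add_cancel hut0⟩
        refine Finset.mem_filter.mpr ⟨hAfin.mem_toFinset.mpr hu', ?_⟩
        intro k hk
        by_cases hkj : k = j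
        · subst hkj; exact le_of_lt hlt
        · refine hmax k ?_
          rw [coord_add_eV]
          rw [Finsupp.add_apply, Finsupp.tsub_apply, eV_apply_blk, eV_apply_blk] at hk
          have hjk : j ≠ k := fun h => hkj h.symm
          simp only [hjk, if_false, add_zero] at hk ⊢
          omega
    · intro hw
      obtain ⟨j, hj, hwj⟩ := Finset.mem_biUnion.mp (Finset.mem_coe.mp hw)
      obtain ⟨u, hu, rfl⟩ := Finset.mem_image.mp hwj
      exact ⟨u, hAfin.mem_toFinset.mp (Finset.mem_filter.mp hu).1, j, hj, rfl⟩
  -- disjointness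
  have hdisj : ∀ j1 ∈ T, ∀ j2 ∈ T, j1 ≠ j2 → Disjoint (img j1) (img j2) := by
    intro j1 _ j2 _ hne
    rw [Finset.disjoint_left]
    intro w h1 h2
    obtain ⟨u1, hu1, he1⟩ := Finset.mem_image.mp h1
    obtain ⟨u2, hu2, he2⟩ := Finset.mem_image.mp h2
    have hK1 : u1 ∈ KT i j1 := (Finset.mem_filter.mp hu1).2
    have hK2 : u2 ∈ KT i j2 := (Finset.mem_filter.mp hu2).2
    have hco : ∀ k, u1 ⟨i, k⟩ + (if j1 = k then 1 else 0)
        = u2 ⟨i, k⟩ + (if j2 = k then 1 else 0) := by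
      intro k
      rw [← coord_add_eV, ← coord_add_eV, he1, he2]
    have h12 : j1 ≤ j2 := by
      have h := hco j1
      have hne' : j2 ≠ j1 := fun h => hne h.symm
      rw [if_pos rfl, if_neg hne'] at h
      refine hK2 j1 ?_
      omega
    have h21 : j2 ≤ j1 := by
      have h := hco j2
      have hne' : j1 ≠ j2 := hne
      rw [if_pos rfl, if_neg hne'] at h
      refine hK1 j2 ?_
      omega
    exact hne (le_antisymm h12 h21)
  -- count
  rw [hcov, Set.ncard_coe_finset, Finset.card_biUnion hdisj]
  refine Finset.sum_congr rfl fun j _ => ?_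
  rw [himg]
  rw [Finset.card_image_of_injective _ (add_left_injective (eV i j))]
  have : A ∩ KT i j = ↑(Af.filter (fun u => u ∈ KT i j)) := by
    ext u
    simp only [Finset.coe_filter, Set.mem_setOf_eq, Set.mem_inter_iff]
    rw [hAf]
    constructor
    · rintro ⟨h1, h2⟩; exact ⟨hAfin.mem_toFinset.mpr h1, h2⟩
    · rintro ⟨h1, h2⟩; exact ⟨hAfin.mem_toFinset.mp h1, h2⟩
  rw [this, Set.ncard_coe_finset]

end EK

/-! ### The comparison (Bayer/Macaulay) theorem for strongly stable sets -/

section Comparison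

variable {s : ℕ} {n : Fin s → ℕ}

theorem segT_zero (i : Fin s) (T : Finset (Fin (n i + 1))) (D : ℕ) :
    segT (n := n) i T D 0 = ∅ := by
  ext u; simp [segT]

theorem MonT_deg0 {i : Fin s} {T : Finset (Fin (n i + 1))} {u : PPVar s n →₀ ℕ}
    (hu : u ∈ MonT i T 0) : u = 0 := tdeg_eq_zero_iff.mp hu.1.2

theorem ncard_slice {i : Fin s} {T : Finset (Fin (n i + 1))} {D : ℕ}
    (t : Fin (n i + 1)) {X : Set (PPVar s n →₀ ℕ)} (hX : X ⊆ MonT i T D) :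
    X.ncard = (X ∩ {u | u ⟨i, t⟩ = 0}).ncard + (DT i t X).ncard := by
  classical
  have hXfin : X.Finite := (MonT_finite i T D).subset hX
  have himg : X ∩ {u | u ⟨i, t⟩ ≠ 0} = (· + eV i t) '' (DT i t X) := by
    ext u
    constructor
    · rintro ⟨h1, h2⟩
      refine ⟨u - eV i t, ?_, sub_eV_add_cancel h2⟩
      show (u - eV i t) + eV i t ∈ X
      rw [sub_eV_add_cancel h2]
      exact h1
    · rintro ⟨w, hw, rfl⟩
      refine ⟨hw, ?_⟩
      show (w + eV i t) ⟨i, t⟩ ≠ 0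
      rw [coord_add_eV]
      simp
  have hdecomp : X = (X ∩ {u | u ⟨i, t⟩ = 0}) ∪ (X ∩ {u | u ⟨i, t⟩ ≠ 0}) := by
    ext u
    by_cases h : u ⟨i, t⟩ = 0 <;> simp [h]
  have hdisj : Disjoint (X ∩ {u | u ⟨i, t⟩ = 0}) (X ∩ {u | u ⟨i, t⟩ ≠ 0}) := by
    rw [Set.disjoint_left]
    rintro u ⟨_, h1⟩ ⟨_, h2⟩
    exact h2 h1
  calc X.ncard = ((X ∩ {u | u ⟨i, t⟩ = 0}) ∪ (X ∩ {u | u ⟨i, t⟩ ≠ 0})).ncard := by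
        rw [← hdecomp]
    _ = (X ∩ {u | u ⟨i, t⟩ = 0}).ncard + (X ∩ {u | u ⟨i, t⟩ ≠ 0}).ncard :=
        Set.ncard_union_eq hdisj (hXfin.subset Set.inter_subset_left)
          (hXfin.subset Set.inter_subset_left)
    _ = (X ∩ {u | u ⟨i, t⟩ = 0}).ncard + (DT i t X).ncard := by
        rw [himg, Set.ncard_image_of_injective _ (add_left_injective (eV i t))]

theorem comparison (i : Fin s) : ∀ (N : ℕ) (T : Finset (Fin (n i + 1))) (D : ℕ),
    D + T.card ≤ N → ∀ A : Set (PPVar s n →₀ ℕ), A ⊆ MonT i T D → StabT i T A →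
    ∀ j : Fin (n i + 1),
      (segT i T D A.ncard ∩ KT i j).ncard ≤ (A ∩ KT i j).ncard := by
  intro N
  induction N with
  | zero =>
      intro T D hle A hA hst j
      have hD : D = 0 := by omega
      subst hD
      -- degree 0
      have hsub : segT i T 0 A.ncard ∩ KT i j ⊆ A ∩ KT i j := by
        rintro u ⟨hu, hK⟩
        refine ⟨?_, hK⟩
        have hu0 : u = 0 := MonT_deg0 hu.1
        have hApos : A.Nonempty := by
          rw [Set.nonempty_iff_ne_empty]
          intro h
          rw [h] at hu
          simp [Set.ncard_empty] at hu
          exact absurd hu.2 (by omega)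
        obtain ⟨a, ha⟩ := hApos
        have : a = 0 := MonT_deg0 (hA ha)
        rw [hu0, ← this]
        exact ha
      exact Set.ncard_le_ncard hsub (((MonT_finite i T 0).subset hA).subset
        Set.inter_subset_left)
  | succ N ih =>
      intro T D hle A hA hst j
      rcases Nat.eq_zero_or_pos D with hD | hDpos
      · -- degree 0 again
        subst hD
        have hsub : segT i T 0 A.ncard ∩ KT i j ⊆ A ∩ KT i j := by
          rintro u ⟨hu, hK⟩
          refine ⟨?_, hK⟩
          have hu0 : u = 0 := MonT_deg0 hu.1
          have hApos : A.Nonempty := by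
            rw [Set.nonempty_iff_ne_empty]
            intro h
            rw [h] at hu
            simp [Set.ncard_empty] at hu
            exact absurd hu.2 (by omega)
          obtain ⟨a, ha⟩ := hApos
          have : a = 0 := MonT_deg0 (hA ha)
          rw [hu0, ← this]
          exact ha
        exact Set.ncard_le_ncard hsub (((MonT_finite i T 0).subset hA).subset
          Set.inter_subset_left)
      obtain ⟨d, rfl⟩ : ∃ d, D = d + 1 := ⟨D - 1, by omega⟩
      rcases T.eq_empty_or_nonempty with hTe | hTne
      · -- empty variable set : A is empty
        subst hTe
        have hAe : A = ∅ := by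
          rw [Set.eq_empty_iff_forall_notMem]
          intro u hu
          have hu' := hA hu
          have hco : ∀ k, u ⟨i, k⟩ = 0 := by
            intro k
            by_contra h0
            simpa using hu'.2 k h0
          have hu0 : u = 0 := ext_block hu'.1.1 (by simp) (fun k => by
            rw [hco k]; simp)
          have : tdeg u = d + 1 := hu'.1.2
          rw [hu0] at this
          simp [tdeg] at this
        rw [hAe]
        simp only [Set.ncard_empty, segT_zero]
        simp
      -- main case
      set t := T.max' hTne with htdef
      have htT : t ∈ T := T.max'_mem hTne
      have htmax : ∀ j' ∈ T, j' ≤ t := fun j' hj' => T.le_max' j' hj'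
      set T' := T.erase t with hT'def
      have hT'card : T'.card + 1 = T.card := Finset.card_erase_add_one htT
      have hAfin : A.Finite := (MonT_finite i T (d + 1)).subset hA
      set L := segT i T (d + 1) A.ncard with hLdef
      have hLsub : L ⊆ MonT i T (d + 1) := segT_subset i T (d + 1) A.ncard
      have hLfin : L.Finite := (MonT_finite i T (d + 1)).subset hLsub
      have hLcard : L.ncard = A.ncard := by
        rw [hLdef, ncard_segT]
        exact min_eq_left (Set.ncard_le_ncard hA (MonT_finite i T (d + 1)))
      set A0 := A ∩ {u | u ⟨i, t⟩ = 0} with hA0def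
      set L0 := L ∩ {u | u ⟨i, t⟩ = 0} with hL0def
      set DA := DT i t A with hDAdef
      set DL := DT i t L with hDLdef
      have hDAsub : DA ⊆ MonT i T d := DT_subset_MonT hA
      have hDAst : StabT i T DA := stab_DT hst
      have hshDA : shT i T DA ⊆ A := shT_DT_subset hst htmax
      have hsliceA : A.ncard = A0.ncard + DA.ncard := ncard_slice t hA
      have hsliceL : L.ncard = L0.ncard + DL.ncard := ncard_slice t hLsub
      -- Bayer at degree d via the inductive hypothesis
      set LS := segT i T d DA.ncard with hLSdef
      have hLSsub : LS ⊆ MonT i T d := segT_subset i T d DA.ncard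
      have hLSst : StabT i T LS := stab_segT i T d DA.ncard
      have hBayer : (shT i T LS).ncard ≤ A.ncard := by
        have h1 : (shT i T LS).ncard = ∑ j' ∈ T, (LS ∩ KT i j').ncard :=
          ncard_shT hLSsub hLSst
        have h2 : (shT i T DA).ncard = ∑ j' ∈ T, (DA ∩ KT i j').ncard :=
          ncard_shT hDAsub hDAst
        have h3 : ∀ j' : Fin (n i + 1), (LS ∩ KT i j').ncard ≤ (DA ∩ KT i j').ncard :=
          ih T d (by omega) DA hDAsub hDAst
        have h4 : (shT i T LS).ncard ≤ (shT i T DA).ncard := by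
          rw [h1, h2]
          exact Finset.sum_le_sum fun j' _ => h3 j'
        exact h4.trans (Set.ncard_le_ncard hshDA hAfin)
      -- Main claim : LS ⊆ DL
      have hmain : LS ⊆ DL := by
        intro w hw
        have hwM : w ∈ MonT i T d := hLSsub hw
        have hwet : w + eV i t ∈ MonT (n := n) i T (d + 1) := add_eV_mem hwM htT
        show w + eV i t ∈ L
        refine ⟨hwet, ?_⟩
        -- the set above w + e_t injects into shT LS minus w + e_t
        have habove : aboveS i T (d + 1) (w + eV i t) ⊆ shT i T LS \ {w + eV i t} := by
          rintro q ⟨hqM, hqlt⟩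
          obtain ⟨t', ht'ne, ht'mem, ht'cmp⟩ := shadow_seg hwM hqM t hqlt
          have hqLS : q - eV i t' ∈ LS := by
            rcases ht'cmp with heq | hlt
            · rw [heq]; exact hw
            · exact segT_upward hw ht'mem hlt
          refine ⟨⟨q - eV i t', hqLS, t', hqM.2 t' ht'ne, (sub_eV_add_cancel ht'ne).symm⟩, ?_⟩
          intro hq0
          rw [Set.mem_singleton_iff] at hq0
          rw [hq0] at hqlt
          exact blockLt_irrefl hqlt
        have hwetsh : w + eV i t ∈ shT i T LS := ⟨w, hw, t, htT, rfl⟩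
        have hshfin : (shT i T LS).Finite :=
          (MonT_finite i T (d + 1)).subset (shT_subset_MonT hLSsub)
        have h5 : rnk i T (d + 1) (w + eV i t) ≤ (shT i T LS \ {w + eV i t}).ncard :=
          Set.ncard_le_ncard habove (hshfin.subset Set.diff_subset)
        have h6 : (shT i T LS \ {w + eV i t}).ncard + 1 = (shT i T LS).ncard :=
          Set.ncard_diff_singleton_add_one hwetsh hshfin
        -- A is nonempty since LS is
        have hApos : 0 < A.ncard := by
          have hDApos : 0 < DA.ncard := by
            by_contra h0
            push_neg at h0
            have : DA.ncard = 0 := by omega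
            rw [hLSdef, this, segT_zero] at hw
            exact hw
          omega
        omega
      -- counting consequences
      have hDLfin : DL.Finite := (MonT_finite i T d).subset (DT_subset_MonT hLsub)
      have hDLcard : DA.ncard ≤ DL.ncard := by
        have h1 : LS.ncard ≤ DL.ncard := Set.ncard_le_ncard hmain hDLfin
        have h2 : LS.ncard = min DA.ncard (MonT (n := n) i T d).ncard := ncard_segT i T d _
        have h3 : DA.ncard ≤ (MonT (n := n) i T d).ncard :=
          Set.ncard_le_ncard hDAsub (MonT_finite i T d)
        omega
      have hL0A0 : L0.ncard ≤ A0.ncard := by omega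
      -- now the claim for a given j
      rcases le_or_gt t j with htj | htj
      · -- K is everything
        have hLK : L ∩ KT i j = L := by
          rw [Set.inter_eq_left]
          intro u hu k hk
          exact le_trans (htmax k ((hLsub hu).2 k hk)) htj
        have hAK : A ∩ KT i j = A := by
          rw [Set.inter_eq_left]
          intro u hu k hk
          exact le_trans (htmax k ((hA hu).2 k hk)) htj
        rw [hLK, hAK, hLcard]
      · -- j < t : pass to T'
        have hL0T' : L0 ⊆ MonT i T' (d + 1) := by
          rintro u ⟨hu, hu0⟩
          refine ⟨(hLsub hu).1, fun k hk => Finset.mem_erase.mpr ⟨?_, (hLsub hu).2 k hk⟩⟩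
          intro hkt
          rw [hkt] at hk
          exact hk hu0
        have hA0T' : A0 ⊆ MonT i T' (d + 1) := by
          rintro u ⟨hu, hu0⟩
          refine ⟨(hA hu).1, fun k hk => Finset.mem_erase.mpr ⟨?_, (hA hu).2 k hk⟩⟩
          intro hkt
          rw [hkt] at hk
          exact hk hu0
        have hA0st : StabT i T' A0 := by
          rintro u ⟨hu, hu0⟩ jb js hjj hjs hne
          refine ⟨hst u hu jb js hjj (Finset.mem_of_mem_erase hjs) hne, ?_⟩
          show (u - eV i jb + eV i js) ⟨i, t⟩ = 0
          have hjbt : jb ≠ t := by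
            intro h
            rw [h] at hne
            exact hne hu0
          have hjst : js ≠ t := by
            intro h
            rw [h] at hjs
            exact absurd rfl (Finset.ne_of_mem_erase hjs)
          have h1 : u ⟨i, t⟩ = 0 := hu0
          rw [Finsupp.add_apply, Finsupp.tsub_apply, eV_apply_blk, eV_apply_blk,
            if_neg hjbt, if_neg hjst, h1]
        -- L0 is an initial segment for T'
        have hL0seg : L0 = segT i T' (d + 1) L0.ncard := by
          refine upward_eq_segT hL0T' ?_
          rintro u hu q hq hlt
          have hqT : q ∈ MonT i T (d + 1) :=
            MonT_mono_T (Finset.erase_subset t T) (d + 1) hq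
          refine ⟨segT_upward hu.1 hqT hlt, ?_⟩
          show q ⟨i, t⟩ = 0
          by_contra h0
          have : t ∈ T' := hq.2 t h0
          exact absurd rfl (Finset.ne_of_mem_erase this)
        have hLK : L ∩ KT i j = L0 ∩ KT i j := by
          ext u
          constructor
          · rintro ⟨h1, h2⟩
            refine ⟨⟨h1, ?_⟩, h2⟩
            show u ⟨i, t⟩ = 0
            by_contra h0
            exact absurd (h2 t h0) (not_le.mpr htj)
          · rintro ⟨h1, h2⟩
            exact ⟨h1.1, h2⟩
        have hAK : A ∩ KT i j = A0 ∩ KT i j := by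
          ext u
          constructor
          · rintro ⟨h1, h2⟩
            refine ⟨⟨h1, ?_⟩, h2⟩
            show u ⟨i, t⟩ = 0
            by_contra h0
            exact absurd (h2 t h0) (not_le.mpr htj)
          · rintro ⟨h1, h2⟩
            exact ⟨h1.1, h2⟩
        rw [hLK, hAK]
        have hsub1 : L0 ∩ KT i j ⊆ segT i T' (d + 1) A0.ncard ∩ KT i j := by
          rintro u ⟨h1, h2⟩
          rw [hL0seg] at h1
          exact ⟨segT_mono i T' (d + 1) hL0A0 h1, h2⟩
        have hstep1 : (L0 ∩ KT i j).ncard ≤ (segT i T' (d + 1) A0.ncard ∩ KT i j).ncard :=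
          Set.ncard_le_ncard hsub1 (((MonT_finite i T' (d + 1)).subset
            (segT_subset i T' (d + 1) A0.ncard)).subset Set.inter_subset_left)
        have hstep2 := ih T' (d + 1) (by omega) A0 hA0T' hA0st j
        exact hstep1.trans hstep2

end Comparison

/-! ### The lex shadow step -/

section LexStep

variable {s : ℕ} {n : Fin s → ℕ}

theorem mem_MonT_univ {i : Fin s} {d : ℕ} {u : PPVar s n →₀ ℕ} :
    u ∈ MonT (n := n) i Finset.univ d ↔ u ∈ blockMon i d := by
  rw [MonT_univ]

/-- If the shadow of a stable set `A` is contained in `B`, then the shadow of the initial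
segment of size `|A|` is contained in the initial segment of size `|B|`. -/
theorem lex_shadow_step {i : Fin s} {d : ℕ} {A B : Set (PPVar s n →₀ ℕ)}
    (hA : A ⊆ MonT i Finset.univ d) (hst : StabT i Finset.univ A)
    (hB : B ⊆ MonT i Finset.univ (d + 1)) (hsh : shT i Finset.univ A ⊆ B)
    {p : PPVar s n →₀ ℕ} (hp : p ∈ segT i Finset.univ d A.ncard) (v : Fin (n i + 1)) :
    p + eV i v ∈ segT (n := n) i Finset.univ (d + 1) B.ncard := by
  classical
  set L := segT i Finset.univ d A.ncard with hLdef
  have hLsub : L ⊆ MonT i Finset.univ d := segT_subset i Finset.univ d A.ncard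
  have hLst : StabT i Finset.univ L := stab_segT i Finset.univ d A.ncard
  have hpet : p + eV i v ∈ MonT (n := n) i Finset.univ (d + 1) :=
    add_eV_mem (hLsub hp) (Finset.mem_univ v)
  refine ⟨hpet, ?_⟩
  have habove : aboveS i Finset.univ (d + 1) (p + eV i v) ⊆
      shT i Finset.univ L \ {p + eV i v} := by
    rintro q ⟨hqM, hqlt⟩
    obtain ⟨t', ht'ne, ht'mem, ht'cmp⟩ := shadow_seg (hLsub hp) hqM v hqlt
    have hqLS : q - eV i t' ∈ L := by
      rcases ht'cmp with heq | hlt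
      · rw [heq]; exact hp
      · exact segT_upward hp ht'mem hlt
    refine ⟨⟨q - eV i t', hqLS, t', Finset.mem_univ t', (sub_eV_add_cancel ht'ne).symm⟩, ?_⟩
    intro hq0
    rw [Set.mem_singleton_iff] at hq0
    rw [hq0] at hqlt
    exact blockLt_irrefl hqlt
  have hwetsh : p + eV i v ∈ shT i Finset.univ L := ⟨p, hp, v, Finset.mem_univ v, rfl⟩
  have hshfin : (shT i Finset.univ L).Finite :=
    (MonT_finite i Finset.univ (d + 1)).subset (shT_subset_MonT hLsub)
  have h5 : rnk i Finset.univ (d + 1) (p + eV i v) ≤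
      (shT i Finset.univ L \ {p + eV i v}).ncard :=
    Set.ncard_le_ncard habove (hshfin.subset Set.diff_subset)
  have h6 : (shT i Finset.univ L \ {p + eV i v}).ncard + 1 = (shT i Finset.univ L).ncard :=
    Set.ncard_diff_singleton_add_one hwetsh hshfin
  -- comparison: shadow of L is at most the shadow of A
  have hBayer : (shT i Finset.univ L).ncard ≤ (shT i Finset.univ A).ncard := by
    have h1 : (shT i Finset.univ L).ncard = ∑ j' ∈ Finset.univ, (L ∩ KT i j').ncard :=
      ncard_shT hLsub hLst
    have h2 : (shT i Finset.univ A).ncard = ∑ j' ∈ Finset.univ, (A ∩ KT i j').ncard :=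
      ncard_shT hA hst
    have h3 := comparison i (d + Finset.univ.card (α := Fin (n i + 1)))
      Finset.univ d (le_refl _) A hA hst
    rw [h1, h2]
    exact Finset.sum_le_sum fun j' _ => h3 j'
  have hfinB : B.Finite := (MonT_finite i Finset.univ (d + 1)).subset hB
  have hlast : (shT i Finset.univ A).ncard ≤ B.ncard := Set.ncard_le_ncard hsh hfinB
  omega

/-- Rearrangement: moving a variable in the `q`-part commutes with adding `p`. -/
theorem add_move_comm {q p : PPVar s n →₀ ℕ} {x : PPVar s n} (h : q x ≠ 0) (y : PPVar s n) :
    (q + p) - Finsupp.single x 1 + Finsupp.single y 1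
      = (q - Finsupp.single x 1 + Finsupp.single y 1) + p := by
  classical
  ext a
  simp only [Finsupp.add_apply, Finsupp.tsub_apply]
  by_cases hax : a = x
  · subst hax
    have : (Finsupp.single a 1 : PPVar s n →₀ ℕ) a = 1 := by simp
    rw [this]
    omega
  · have : (Finsupp.single x 1 : PPVar s n →₀ ℕ) a = 0 := by
      rw [Finsupp.single_apply, if_neg (fun hc => hax hc.symm)]
    rw [this]
    omega

/-- Rearrangement: moving a variable in the `p`-part commutes with adding `q`. -/
theorem add_move_inner {q p : PPVar s n →₀ ℕ} {x : PPVar s n} (h : p x ≠ 0) (y : PPVar s n) :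
    (q + p) - Finsupp.single x 1 + Finsupp.single y 1
      = q + (p - Finsupp.single x 1 + Finsupp.single y 1) := by
  classical
  ext a
  simp only [Finsupp.add_apply, Finsupp.tsub_apply]
  by_cases hax : a = x
  · subst hax
    have : (Finsupp.single a 1 : PPVar s n →₀ ℕ) a = 1 := by simp
    rw [this]
    omega
  · have : (Finsupp.single x 1 : PPVar s n →₀ ℕ) a = 0 := by
      rw [Finsupp.single_apply, if_neg (fun hc => hax hc.symm)]
    rw [this]
    omega

end LexStep

/-! ### Families of graded pieces and the lexification step -/

section Family

variable {s : ℕ} {n : Fin s → ℕ}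

/-- A good family of graded pieces: homogeneous, strongly multistable, closed under
multiplication by variables. -/
def GoodFam (F : (Fin s → ℕ) → Set (PPVar s n →₀ ℕ)) : Prop :=
  (∀ b u, u ∈ F b → wdeg (ppw s n) u = b) ∧
  (∀ b, StronglyMultistableSet (F b)) ∧
  (∀ b u, u ∈ F b → ∀ v : PPVar s n, u + Finsupp.single v 1 ∈ F (b + Pi.single v.1 1))

theorem blockMon_finite (i : Fin s) (d : ℕ) : (blockMon (n := n) i d).Finite := by
  rw [← MonT_univ]
  exact MonT_finite i Finset.univ d

theorem lexSeg_mono (i : Fin s) (d : ℕ) {c c' : ℕ} (h : c ≤ c') :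
    lexSeg (n := n) i d c ⊆ lexSeg i d c' := by
  rw [lexSeg_eq_segT, lexSeg_eq_segT]
  exact segT_mono i Finset.univ d h

theorem blockPart_single_blk (i : Fin s) (j : Fin (n i + 1)) :
    blockPart i (Finsupp.single (⟨i, j⟩ : PPVar s n) (1 : ℕ)) = Finsupp.single ⟨i, j⟩ 1 :=
  blockPart_eV i j

theorem offBlock_single_blk (i : Fin s) (j : Fin (n i + 1)) :
    offBlock i (Finsupp.single (⟨i, j⟩ : PPVar s n) (1 : ℕ)) = 0 :=
  offBlock_eV i j

theorem wdeg_decomp (i : Fin s) (u : PPVar s n →₀ ℕ) :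
    wdeg (ppw s n) u
      = wdeg (ppw s n) (offBlock i u) + (tdeg (blockPart i u)) • Pi.single i 1 := by
  conv_lhs => rw [← off_add_block i u]
  rw [wdeg_add, wdeg_of_block i (blockPart i u) (blockPart_support i u)]

theorem xiLexify_P3 {F : (Fin s → ℕ) → Set (PPVar s n →₀ ℕ)} (i : Fin s)
    (h3 : ∀ b u, u ∈ F b → wdeg (ppw s n) u = b) :
    ∀ b w, w ∈ xiLexify i (F b) → wdeg (ppw s n) w = b := by
  rintro b w ⟨u, hu, hoff, hseg⟩
  have hbp : blockPart i w ∈ blockMon i (tdeg (blockPart i u)) := hseg.1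
  have hdw : tdeg (blockPart i w) = tdeg (blockPart i u) := hbp.2
  have e1 : wdeg (ppw s n) w
      = wdeg (ppw s n) (offBlock i w) + (tdeg (blockPart i w)) • Pi.single i 1 :=
    wdeg_decomp i w
  have e2 : wdeg (ppw s n) u
      = wdeg (ppw s n) (offBlock i u) + (tdeg (blockPart i u)) • Pi.single i 1 :=
    wdeg_decomp i u
  rw [← h3 b u hu, e2, ← hoff, ← hdw, ← e1]

theorem xiLexify_P1 {F : (Fin s → ℕ) → Set (PPVar s n →₀ ℕ)} (i : Fin s)
    (h3 : ∀ b u, u ∈ F b → wdeg (ppw s n) u = b)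
    (h1 : ∀ b, StronglyMultistableSet (F b)) (b : Fin s → ℕ) :
    StronglyMultistableSet (xiLexify i (F b)) := by
  classical
  rintro w ⟨u, hu, hoff, hseg⟩ i0 j j' hjj hne
  by_cases hi0 : i0 = i
  · subst hi0
    refine ⟨u, hu, ?_, ?_⟩
    · rw [offBlock_add, offBlock_sub, offBlock_single_blk, offBlock_single_blk,
        tsub_zero, add_zero, hoff]
    · have hbp : blockPart i0 (w - Finsupp.single ⟨i0, j⟩ 1 + Finsupp.single ⟨i0, j'⟩ 1)
          = blockPart i0 w - eV i0 j + eV i0 j' := by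
        rw [blockPart_add, blockPart_sub, blockPart_single_blk, blockPart_single_blk]
        rfl
      rw [hbp]
      rw [lexSeg_eq_segT] at hseg ⊢
      have hbcoord : blockPart i0 w ⟨i0, j⟩ ≠ 0 := by
        rw [blockPart_apply]; exact hne
      exact stab_segT i0 Finset.univ _ _ (blockPart i0 w) hseg j j' hjj
        (Finset.mem_univ j') hbcoord
  · -- off-block move
    set s1 := Finsupp.single (⟨i0, j⟩ : PPVar s n) (1 : ℕ) with hs1
    set s2 := Finsupp.single (⟨i0, j'⟩ : PPVar s n) (1 : ℕ) with hs2
    have hi0' : (⟨i0, j⟩ : PPVar s n).1 ≠ i := hi0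
    have hi0'' : (⟨i0, j'⟩ : PPVar s n).1 ≠ i := hi0
    have hs1b : blockPart i s1 = 0 := blockPart_single_ne i _ hi0' 1
    have hs2b : blockPart i s2 = 0 := blockPart_single_ne i _ hi0'' 1
    have hs1o : offBlock i s1 = s1 := offBlock_single_ne i _ hi0' 1
    have hs2o : offBlock i s2 = s2 := offBlock_single_ne i _ hi0'' 1
    have hucoord : u ⟨i0, j⟩ ≠ 0 := by
      have e1 : offBlock i u ⟨i0, j⟩ = u ⟨i0, j⟩ := offBlock_apply_ne i u _ hi0'
      have e2 : offBlock i w ⟨i0, j⟩ = w ⟨i0, j⟩ := offBlock_apply_ne i w _ hi0'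
      rw [← e1, ← hoff, e2]
      exact hne
    have hu' : u - s1 + s2 ∈ F b := h1 b u hu i0 j j' hjj hucoord
    refine ⟨u - s1 + s2, hu', ?_, ?_⟩
    · rw [offBlock_add, offBlock_sub, hs1o, hs2o, hoff,
        offBlock_add, offBlock_sub, hs1o, hs2o]
    · have hbpu : blockPart i (u - s1 + s2) = blockPart i u := by
        rw [blockPart_add, blockPart_sub, hs1b, hs2b, tsub_zero, add_zero]
      have hbpw : blockPart i (w - s1 + s2) = blockPart i w := by
        rw [blockPart_add, blockPart_sub, hs1b, hs2b, tsub_zero, add_zero]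
      rw [hbpw, hbpu]
      have hqcoord : offBlock i u ⟨i0, j⟩ ≠ 0 := by
        rw [offBlock_apply_ne i u _ hi0']; exact hucoord
      have hfib : {p | p ∈ blockMon i (tdeg (blockPart i u)) ∧ offBlock i u + p ∈ F b}
          ⊆ {p | p ∈ blockMon i (tdeg (blockPart i u)) ∧ offBlock i (u - s1 + s2) + p ∈ F b} := by
        rintro p ⟨hp1, hp2⟩
        refine ⟨hp1, ?_⟩
        have h4 : (offBlock i u + p) ⟨i0, j⟩ ≠ 0 := by
          rw [Finsupp.add_apply]
          omega
        have h5 := h1 b _ hp2 i0 j j' hjj h4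
        rw [add_move_comm hqcoord] at h5
        rw [offBlock_add, offBlock_sub, hs1o, hs2o]
        exact h5
      have hfin : ({p | p ∈ blockMon i (tdeg (blockPart i u))
          ∧ offBlock i (u - s1 + s2) + p ∈ F b}).Finite :=
        (blockMon_finite i _).subset fun p hp => hp.1
      exact lexSeg_mono i _ (Set.ncard_le_ncard hfib hfin) hseg

theorem xiLexify_P2 {F : (Fin s → ℕ) → Set (PPVar s n →₀ ℕ)} (i : Fin s)
    (h3 : ∀ b u, u ∈ F b → wdeg (ppw s n) u = b)
    (h1 : ∀ b, StronglyMultistableSet (F b))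
    (h2 : ∀ b u, u ∈ F b → ∀ v : PPVar s n, u + Finsupp.single v 1 ∈ F (b + Pi.single v.1 1)) :
    ∀ b w, w ∈ xiLexify i (F b) → ∀ v : PPVar s n,
      w + Finsupp.single v 1 ∈ xiLexify i (F (b + Pi.single v.1 1)) := by
  classical
  rintro b w ⟨u, hu, hoff, hseg⟩ ⟨i0, jv⟩
  by_cases hi0 : i0 = i
  · subst hi0
    -- same-block case
    set dd := tdeg (blockPart i0 u) with hdd
    set q := offBlock i0 u with hq
    set A := {p | p ∈ blockMon i0 dd ∧ q + p ∈ F b} with hA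
    set B := {p | p ∈ blockMon i0 (dd + 1) ∧ q + p ∈ F (b + Pi.single i0 1)} with hB
    have hAsub : A ⊆ MonT i0 Finset.univ dd := fun p hp => mem_MonT_univ.mpr hp.1
    have hAst : StabT i0 Finset.univ A := by
      rintro p ⟨hp1, hp2⟩ jb js hjj _ hne
      refine ⟨?_, ?_⟩
      · exact mem_MonT_univ.mp (mem_MonT_move (mem_MonT_univ.mpr hp1) (Finset.mem_univ js) hne)
      · have h4 : (q + p) ⟨i0, jb⟩ ≠ 0 := by
          rw [Finsupp.add_apply]
          omega
        have h5 := h1 b _ hp2 i0 jb js hjj h4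
        rw [add_move_inner hne] at h5
        exact h5
    have hBsub : B ⊆ MonT i0 Finset.univ (dd + 1) := fun p hp => mem_MonT_univ.mpr hp.1
    have hsh : shT i0 Finset.univ A ⊆ B := by
      rintro w' ⟨p, hp, jj, _, rfl⟩
      refine ⟨mem_MonT_univ.mp (add_eV_mem (mem_MonT_univ.mpr hp.1) (Finset.mem_univ jj)), ?_⟩
      have h5 := h2 b _ hp.2 ⟨i0, jj⟩
      have e : (q + p) + Finsupp.single (⟨i0, jj⟩ : PPVar s n) 1 = q + (p + eV i0 jj) := by
        rw [add_assoc]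
        rfl
      rw [e] at h5
      exact h5
    have hu' : u + Finsupp.single (⟨i0, jv⟩ : PPVar s n) 1 ∈ F (b + Pi.single i0 1) :=
      h2 b u hu ⟨i0, jv⟩
    refine ⟨u + Finsupp.single ⟨i0, jv⟩ 1, hu', ?_, ?_⟩
    · rw [offBlock_add, offBlock_add, offBlock_single_blk, add_zero, add_zero, hoff]
    · have hbpu' : blockPart i0 (u + Finsupp.single ⟨i0, jv⟩ 1)
          = blockPart i0 u + eV i0 jv := by
        rw [blockPart_add, blockPart_single_blk]
        rfl
      have hbpw' : blockPart i0 (w + Finsupp.single ⟨i0, jv⟩ 1)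
          = blockPart i0 w + eV i0 jv := by
        rw [blockPart_add, blockPart_single_blk]
        rfl
      rw [hbpw', hbpu']
      have hdeq : ((blockPart i0 u + eV i0 jv).sum fun _ e => e) = dd + 1 := by
        show tdeg (blockPart i0 u + eV i0 jv) = dd + 1
        rw [tdeg_add, tdeg_eV]
      rw [hdeq]
      have hoffu' : offBlock i0 (u + Finsupp.single ⟨i0, jv⟩ 1) = q := by
        rw [offBlock_add, offBlock_single_blk, add_zero]
      rw [hoffu']
      have hseg' : blockPart i0 w ∈ segT i0 Finset.univ dd A.ncard := by
        rw [lexSeg_eq_segT] at hseg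
        exact hseg
      have hres := lex_shadow_step hAsub hAst hBsub hsh hseg' jv
      rw [lexSeg_eq_segT]
      exact hres
  · -- off-block case
    set s1 := Finsupp.single (⟨i0, jv⟩ : PPVar s n) (1 : ℕ) with hs1
    have hi0' : (⟨i0, jv⟩ : PPVar s n).1 ≠ i := hi0
    have hs1b : blockPart i s1 = 0 := blockPart_single_ne i _ hi0' 1
    have hs1o : offBlock i s1 = s1 := offBlock_single_ne i _ hi0' 1
    have hu' : u + s1 ∈ F (b + Pi.single i0 1) := h2 b u hu ⟨i0, jv⟩
    refine ⟨u + s1, hu', ?_, ?_⟩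
    · rw [offBlock_add, offBlock_add, hs1o, hoff]
    · have hbpu' : blockPart i (u + s1) = blockPart i u := by
        rw [blockPart_add, hs1b, add_zero]
      have hbpw' : blockPart i (w + s1) = blockPart i w := by
        rw [blockPart_add, hs1b, add_zero]
      rw [hbpw', hbpu']
      have hfib : {p | p ∈ blockMon i (tdeg (blockPart i u)) ∧ offBlock i u + p ∈ F b}
          ⊆ {p | p ∈ blockMon i (tdeg (blockPart i u))
              ∧ offBlock i (u + s1) + p ∈ F (b + Pi.single i0 1)} := by
        rintro p ⟨hp1, hp2⟩
        refine ⟨hp1, ?_⟩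
        have h5 := h2 b _ hp2 ⟨i0, jv⟩
        have e : (offBlock i u + p) + s1 = offBlock i (u + s1) + p := by
          rw [offBlock_add, hs1o, add_right_comm]
        rw [e] at h5
        exact h5
      have hfin : ({p | p ∈ blockMon i (tdeg (blockPart i u))
          ∧ offBlock i (u + s1) + p ∈ F (b + Pi.single i0 1)}).Finite :=
        (blockMon_finite i _).subset fun p hp => hp.1
      exact lexSeg_mono i _ (Set.ncard_le_ncard hfib hfin) hseg

theorem xiLexify_good {F : (Fin s → ℕ) → Set (PPVar s n →₀ ℕ)} (i : Fin s)
    (hF : GoodFam F) : GoodFam (fun b => xiLexify i (F b)) :=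
  ⟨xiLexify_P3 i hF.1, xiLexify_P1 i hF.1 hF.2.1, xiLexify_P2 i hF.1 hF.2.1 hF.2.2⟩

theorem lexifyUpTo_good {F : (Fin s → ℕ) → Set (PPVar s n →₀ ℕ)} (hF : GoodFam F) :
    ∀ t, GoodFam (fun b => lexifyUpTo (F b) t) := by
  intro t
  induction t with
  | zero => simpa only [lexifyUpTo] using hF
  | succ t ih =>
      by_cases h : t < s
      · simp only [lexifyUpTo, dif_pos h]
        exact xiLexify_good ⟨t, h⟩ ih
      · simp only [lexifyUpTo, dif_neg h]
        exact ih

theorem good_monomialsOf {k : Type*} [Field k] (I : Ideal (MvPolynomial (PPVar s n) k))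
    (hI : StronglyMultistable I) : GoodFam (fun b => monomialsOf I b) := by
  refine ⟨fun b u hu => hu.1, ?_, ?_⟩
  · intro b u hu i0 j j' hjj hne
    refine ⟨?_, hI.2 u hu.2 i0 j j' hjj hne⟩
    have hcanc := move_add_cancel (i := i0) (j := j) (j' := j') (u := u) hne
    have hw : wdeg (ppw s n) (u - eV i0 j + eV i0 j') + wdeg (ppw s n) (eV i0 j)
        = wdeg (ppw s n) u + wdeg (ppw s n) (eV i0 j') := by
      rw [← wdeg_add, ← wdeg_add, hcanc]
    have he : wdeg (ppw s n) (eV (n := n) i0 j) = Pi.single i0 1 := by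
      rw [eV, wdeg_single, one_smul]
      rfl
    have he' : wdeg (ppw s n) (eV (n := n) i0 j') = Pi.single i0 1 := by
      rw [eV, wdeg_single, one_smul]
      rfl
    rw [he, he', hu.1] at hw
    exact add_right_cancel hw
  · intro b u hu v
    refine ⟨?_, ?_⟩
    · rw [wdeg_add, wdeg_single, one_smul, hu.1]
      rfl
    · have h5 : monomial (u + Finsupp.single v 1) (1 : k)
          = monomial u 1 * monomial (Finsupp.single v 1) 1 := by
        rw [monomial_mul, one_mul]
      rw [h5]
      exact Ideal.mul_mem_right _ _ hu.2

end Family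

/-! ### Auxiliary material for the proof -/

section CoreClosure

variable {k : Type*} [Field k] {s : ℕ} {n : Fin s → ℕ}

/-- The key combinatorial fact: the union of the multilexified graded pieces is closed under
multiplication by variables. -/
theorem multilexify_shadow_closed (I : Ideal (MvPolynomial (PPVar s n) k))
    (hI : StronglyMultistable I) :
    ∀ u ∈ ⋃ a : Fin s → ℕ, multilexify (monomialsOf I a), ∀ v : PPVar s n,
      u + Finsupp.single v 1 ∈ ⋃ a : Fin s → ℕ, multilexify (monomialsOf I a) := by
  intro u hu v
  rw [Set.mem_iUnion] at hu ⊢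
  obtain ⟨a, ha⟩ := hu
  refine ⟨a + Pi.single v.1 1, ?_⟩
  have hg := lexifyUpTo_good (good_monomialsOf I hI) s
  exact hg.2.2 a u ha v

theorem mem_span_monomials_iff {S : Set (PPVar s n →₀ ℕ)} {f : MvPolynomial (PPVar s n) k} :
    f ∈ Submodule.span k ((fun u => (monomial u (1 : k))) '' S) ↔ ↑f.support ⊆ S := by
  rw [← MvPolynomial.restrictSupport_eq_span, MvPolynomial.mem_restrictSupport_iff]

end CoreClosure

/-- **Lemma: `I^{multilex}` is an ideal.** For a strongly multistable ideal `I`, the `k`-span of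
the monomials obtained by multilexifying each graded piece of `I` is closed under multiplication
by arbitrary polynomials, i.e. it is an ideal. -/
theorem multilexify_is_ideal {k : Type*} [Field k] {s : ℕ} {n : Fin s → ℕ}
    (I : Ideal (MvPolynomial (PPVar s n) k)) (hI : StronglyMultistable I) :
    ∀ g f : MvPolynomial (PPVar s n) k,
      f ∈ Submodule.span k ((fun u => (monomial u (1 : k))) ''
          ⋃ a : Fin s → ℕ, multilexify (monomialsOf I a)) →
      g * f ∈ Submodule.span k ((fun u => (monomial u (1 : k))) ''
          ⋃ a : Fin s → ℕ, multilexify (monomialsOf I a)) := by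
  classical
  intro g f hf
  set S := ⋃ a : Fin s → ℕ, multilexify (monomialsOf I a) with hS
  have hone : ∀ u ∈ S, ∀ (v : PPVar s n) (c : ℕ), u + Finsupp.single v c ∈ S := by
    intro u hu v c
    induction c with
    | zero => simpa using hu
    | succ c ih =>
        have : u + Finsupp.single v (c + 1) = (u + Finsupp.single v c) + Finsupp.single v 1 := by
          rw [add_assoc, ← Finsupp.single_add]
        rw [this]
        exact multilexify_shadow_closed I hI _ ih v
  have hcl : ∀ (w : PPVar s n →₀ ℕ), ∀ u ∈ S, u + w ∈ S := by
    intro w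
    induction w using Finsupp.induction with
    | zero => intro u hu; simpa using hu
    | single_add a b w hw hb ih =>
        intro u hu
        have : u + (Finsupp.single a b + w) = (u + Finsupp.single a b) + w := by
          rw [add_assoc]
        rw [this]
        exact ih _ (hone u hu a b)
  rw [mem_span_monomials_iff] at hf ⊢
  intro m hm
  have hm' : m ∈ (g * f).support := hm
  obtain ⟨a, ha, b, hb, rfl⟩ := Finset.mem_add.mp (MvPolynomial.support_mul g f hm')
  rw [add_comm]
  exact hcl a b (hf hb)

end Gotzmann
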